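/- arXiv:2003.04062 — 6 statements merged into one kernel-verified Lean document; each statement's English description precedes it below -/
import Mathlib

section
/- In a digraph D = (V,A) with a multiset R = {r_1, ..., r_k} of vertices of V, there exist pairwise arc-disjoint spanning r_i-arborescences (i = 1,...,k) if and only if for every nonempty subset X of V, the in-degree d_A^-(X) is at least the number of roots r_i not in X. -/
open Set

section Defs

variable {V A E S : Type}

/-- In-degree of a vertex set: number of arcs with tail outside `X` and head in `X`. -/
noncomputable def din (tl hd : A → V) (X : Set V) : ℕ :=
  {a | tl a ∉ X ∧ hd a ∈ X}.ncard

/-- One step in a mixed graph: an arc used forwards, or an edge used in either direction. -/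
def mstep (tl hd : A → V) (e1 e2 : E → V) (u v : V) : Prop :=
  (∃ a, tl a = u ∧ hd a = v) ∨ (∃ e, (e1 e = u ∧ e2 e = v) ∨ (e2 e = u ∧ e1 e = v))

/-- Mixed reachability. -/
def mreach (tl hd : A → V) (e1 e2 : E → V) : V → V → Prop :=
  Relation.ReflTransGen (mstep tl hd e1 e2)

/-- `Wset X` is `X` together with all vertices from which `X` is reachable. -/
def Wset (tl hd : A → V) (e1 e2 : E → V) (X : Set V) : Set V :=
  {v | ∃ x ∈ X, mreach tl hd e1 e2 v x}

/-- `Uset r` is the set of vertices reachable from `r`. -/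
def Uset (tl hd : A → V) (e1 e2 : E → V) (r : V) : Set V :=
  {v | mreach tl hd e1 e2 r v}

/-- Pure digraph reachability-closure (no undirected edges). -/
def dW (tl hd : A → V) (X : Set V) : Set V :=
  Wset tl hd (Empty.elim : Empty → V) (Empty.elim : Empty → V) X

/-- Pure digraph reachability set from a root. -/
def dU (tl hd : A → V) (r : V) : Set V :=
  Uset tl hd (Empty.elim : Empty → V) (Empty.elim : Empty → V) r

/-- `B` is the arc set of an `r`-arborescence with vertex set `VT`:
every arc of `B` stays in `VT`, no arc of `B` enters `r`, every other vertex of `VT`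
has exactly one entering arc of `B`, and every vertex of `VT` is reachable from `r`
using arcs of `B`. -/
def IsArbOn (tl hd : A → V) (B : Set A) (r : V) (VT : Set V) : Prop :=
  r ∈ VT ∧ (∀ a ∈ B, tl a ∈ VT ∧ hd a ∈ VT) ∧ (∀ a ∈ B, hd a ≠ r) ∧
  (∀ v ∈ VT, v ≠ r → ∃! a, a ∈ B ∧ hd a = v) ∧
  (∀ v ∈ VT, Relation.ReflTransGen (fun x y => ∃ a ∈ B, tl a = x ∧ hd a = y) r v)

/-- A matroid on `S`, presented by its rank function. -/
structure RankFn (S : Type) where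
  r : Set S → ℕ
  mono : ∀ {X Y : Set S}, X ⊆ Y → r X ≤ r Y
  submodular : ∀ X Y : Set S, r (X ∪ Y) + r (X ∩ Y) ≤ r X + r Y
  le_ncard : ∀ X : Set S, r X ≤ X.ncard
  rank_empty : r ∅ = 0

/-- Independence in a matroid given by its rank function. -/
def RankFn.Indep (M : RankFn S) (X : Set S) : Prop := M.r X = X.ncard

/-- `π` is `M`-independent: the multiset of roots placed at each vertex is independent. -/
def MIndep (M : RankFn S) (π : S → V) : Prop := ∀ v : V, M.Indep (π ⁻¹' {v})

/-- `C` is the vertex set of a strong component of the mixed graph. -/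
def IsStrongComp (tl hd : A → V) (e1 e2 : E → V) (C : Set V) : Prop :=
  C.Nonempty ∧ (∀ u ∈ C, ∀ v ∈ C, mreach tl hd e1 e2 u v) ∧
  (∀ v : V, (∃ u ∈ C, mreach tl hd e1 e2 u v ∧ mreach tl hd e1 e2 v u) → v ∈ C)

/-- Number of undirected edges joining two distinct parts of the subpartition `P`,
or joining a part of `P` to the complement of the union of the parts. -/
noncomputable def eP {t : ℕ} (e1 e2 : E → V) (P : Fin t → Set V) : ℕ :=
  {e | (∃ q, e1 e ∈ P q ∨ e2 e ∈ P q) ∧ ¬ ∃ q, e1 e ∈ P q ∧ e2 e ∈ P q}.ncard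

/-- Tail map of the digraph obtained by keeping all arcs and orienting each edge by `o`. -/
def ctl (tl : A → V) (e1 e2 : E → V) (o : E → Bool) : A ⊕ E → V
  | .inl a => tl a
  | .inr e => if o e then e1 e else e2 e

/-- Head map of the digraph obtained by keeping all arcs and orienting each edge by `o`. -/
def chd (hd : A → V) (e1 e2 : E → V) (o : E → Bool) : A ⊕ E → V
  | .inl a => hd a
  | .inr e => if o e then e2 e else e1 e

/-- Existence of a maximal `M`-independent packing of mixed arborescences in
`(F = (V; E, A), M, S, π)`: there is an orientation of the undirected edges and
pairwise edge- and arc-disjoint arborescences `T_s` rooted at `π s`, such that at each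
vertex `v` the set of indices `s` with `v ∈ V(T_s)` is independent in `M` and has
cardinality `r_M(S_{W(v)})` (with `W` the mixed-reachability closure). -/
def MaxIndMixedPacking (tl hd : A → V) (e1 e2 : E → V) (M : RankFn S) (π : S → V) : Prop :=
  ∃ (o : E → Bool) (B : S → Set (A ⊕ E)) (VT : S → Set V),
    (∀ s s' : S, s ≠ s' → Disjoint (B s) (B s')) ∧
    (∀ s, IsArbOn (ctl tl e1 e2 o) (chd hd e1 e2 o) (B s) (π s) (VT s)) ∧
    (∀ v : V, M.Indep {s | v ∈ VT s} ∧
      ({s | v ∈ VT s}).ncard = M.r (π ⁻¹' Wset tl hd e1 e2 {v}))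

/-- The function `f_C` from Theorem (iii):
`f_C(X) = max { r_M(S_{W(V(C))}) − r_M(S_{X₀}) − d_A^-(X₀) :
X ⊆ X₀, X₀ \ X = W(Y) for some Y ⊆ W(V(C)) \ V(C) }`. -/
noncomputable def fC (tl hd : A → V) (e1 e2 : E → V) (M : RankFn S) (π : S → V)
    (C : Set V) (X : Set V) : ℤ :=
  sSup {z : ℤ | ∃ X0 : Set V, X ⊆ X0 ∧
    (∃ Y ⊆ Wset tl hd e1 e2 C \ C, X0 \ X = Wset tl hd e1 e2 Y) ∧
    z = (M.r (π ⁻¹' Wset tl hd e1 e2 C) : ℤ) - M.r (π ⁻¹' X0) - din tl hd X0}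

end Defs


section AuxProof

open Set Relation

variable {V A : Type} [Fintype V] [Fintype A]

/-- Arcs of `A'` entering `X`. -/
noncomputable def dinOn (tl hd : A → V) (A' : Set A) (X : Set V) : ℕ :=
  {a | a ∈ A' ∧ tl a ∉ X ∧ hd a ∈ X}.ncard

lemma din_eq_dinOn (tl hd : A → V) (X : Set V) : din tl hd X = dinOn tl hd Set.univ X := by
  unfold din dinOn
  congr 1
  ext a
  simp

lemma dinOn_submod (tl hd : A → V) (A' : Set A) (X Y : Set V) :
    dinOn tl hd A' (X ∪ Y) + dinOn tl hd A' (X ∩ Y) ≤ dinOn tl hd A' X + dinOn tl hd A' Y := by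
  classical
  unfold dinOn
  set s := {a | a ∈ A' ∧ tl a ∉ X ∪ Y ∧ hd a ∈ X ∪ Y} with hs
  set t := {a | a ∈ A' ∧ tl a ∉ X ∩ Y ∧ hd a ∈ X ∩ Y} with ht
  set sX := {a | a ∈ A' ∧ tl a ∉ X ∧ hd a ∈ X} with hsX
  set sY := {a | a ∈ A' ∧ tl a ∉ Y ∧ hd a ∈ Y} with hsY
  have h1 : s ∪ t ⊆ sX ∪ sY := by
    intro a ha
    simp only [hs, ht, hsX, hsY, Set.mem_union, Set.mem_setOf_eq, Set.mem_inter_iff] at *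
    tauto
  have h2 : s ∩ t ⊆ sX ∩ sY := by
    intro a ha
    simp only [hs, ht, hsX, hsY, Set.mem_union, Set.mem_setOf_eq, Set.mem_inter_iff] at *
    tauto
  have e1 : s.ncard + t.ncard = (s ∪ t).ncard + (s ∩ t).ncard :=
    (Set.ncard_union_add_ncard_inter s t (Set.toFinite _) (Set.toFinite _)).symm
  have e2 : sX.ncard + sY.ncard = (sX ∪ sY).ncard + (sX ∩ sY).ncard :=
    (Set.ncard_union_add_ncard_inter sX sY (Set.toFinite _) (Set.toFinite _)).symm
  have le1 : (s ∪ t).ncard ≤ (sX ∪ sY).ncard := Set.ncard_le_ncard h1 (Set.toFinite _)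
  have le2 : (s ∩ t).ncard ≤ (sX ∩ sY).ncard := Set.ncard_le_ncard h2 (Set.toFinite _)
  omega

lemma p_modular {k : ℕ} (r : Fin k → V) (X Z : Set V) :
    ({i | r i ∉ X ∪ Z}).ncard + ({i | r i ∉ X ∩ Z}).ncard
      = ({i | r i ∉ X}).ncard + ({i | r i ∉ Z}).ncard := by
  classical
  have h1 : {i | r i ∉ X ∪ Z} = {i | r i ∉ X} ∩ {i | r i ∉ Z} := by
    ext i; simp [not_or]
  have h2 : {i | r i ∉ X ∩ Z} = {i | r i ∉ X} ∪ {i | r i ∉ Z} := by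
    ext i; simp only [Set.mem_setOf_eq, Set.mem_inter_iff, Set.mem_union]; tauto
  rw [h1, h2, add_comm]
  exact Set.ncard_union_add_ncard_inter _ _ (Set.toFinite _) (Set.toFinite _)

lemma exists_min_bad {P : Set V → Prop} (h : ∃ X, P X) :
    ∃ X, P X ∧ ∀ Z, P Z → Z ⊆ X → Z = X := by
  classical
  obtain ⟨X, hX, hmin⟩ := Set.Finite.exists_minimal (Set.toFinite {X | P X}) h
  exact ⟨X, hX, fun Z hZ hsub => Set.Subset.antisymm hsub (hmin hZ hsub)⟩

lemma cross_lemma {tl hd : A → V} {B : Set A} {X : Set V} {u x : V}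
    (h : Relation.ReflTransGen (fun x y => ∃ a ∈ B, tl a = x ∧ hd a = y) u x)
    (hu : u ∉ X) : x ∈ X → ∃ a, a ∈ B ∧ tl a ∉ X ∧ hd a ∈ X := by
  induction h with
  | refl => intro hx; exact absurd hx hu
  | @tail b c h1 h2 ih =>
    intro hx
    obtain ⟨a, haB, hta, hha⟩ := h2
    by_cases hbX : tl a ∈ X
    · exact ih (hta ▸ hbX)
    · exact ⟨a, haB, hbX, hha ▸ hx⟩

lemma grow (tl hd : A → V) (A' : Set A) (k : ℕ) (r : Fin (k + 1) → V)
    (hcond : ∀ X : Set V, X.Nonempty → ({i | r i ∉ X}).ncard ≤ dinOn tl hd A' X) :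
    ∀ (n : ℕ) (B1 : Set A) (S : Set V), (Set.univ \ S).ncard ≤ n →
      B1 ⊆ A' → IsArbOn tl hd B1 (r 0) S →
      (∀ X : Set V, X.Nonempty → ({i : Fin k | r i.succ ∉ X}).ncard ≤ dinOn tl hd (A' \ B1) X) →
      ∃ B1' : Set A, B1' ⊆ A' ∧ IsArbOn tl hd B1' (r 0) Set.univ ∧
        ∀ X : Set V, X.Nonempty →
          ({i : Fin k | r i.succ ∉ X}).ncard ≤ dinOn tl hd (A' \ B1') X := by
  classical
  intro n
  induction n with
  | zero =>
    intro B1 S hn hsub harb hinv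
    have h0 : (Set.univ \ S : Set V).ncard = 0 := Nat.le_zero.mp hn
    have hdiff : (Set.univ \ S : Set V) = ∅ := (Set.ncard_eq_zero (Set.toFinite _)).mp h0
    have hS : S = Set.univ := Set.eq_univ_of_univ_subset (Set.diff_eq_empty.mp hdiff)
    exact ⟨B1, hsub, hS ▸ harb, hinv⟩
  | succ n ih =>
    intro B1 S hn hsub harb hinv
    by_cases hS : S = Set.univ
    · exact ⟨B1, hsub, hS ▸ harb, hinv⟩
    obtain ⟨hrS, hBS, hnr, huniq, hreach⟩ := harb
    -- p is the root-counting function for roots r 1 .. r k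
    set p : Set V → ℕ := fun Z => ({i : Fin k | r i.succ ∉ Z}).ncard with hp
    -- bad sets: tight sets leaving S
    set Bad : Set V → Prop := fun Z =>
      Z.Nonempty ∧ dinOn tl hd (A' \ B1) Z = p Z ∧ (Z \ S).Nonempty with hBad
    have hVbad : Bad Set.univ := by
      refine ⟨⟨r 0, trivial⟩, ?_, ?_⟩
      · have e1 : {a | a ∈ A' \ B1 ∧ tl a ∉ (Set.univ : Set V) ∧ hd a ∈ Set.univ} = ∅ := by
          ext a; simp
        have e2 : {i : Fin k | r i.succ ∉ (Set.univ : Set V)} = ∅ := by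
          ext i; simp
        simp [dinOn, e1, hp, e2]
      · obtain ⟨v, hv⟩ := (Set.ne_univ_iff_exists_notMem S).mp hS
        exact ⟨v, trivial, hv⟩
    obtain ⟨X, ⟨hXne, hXtight, hXS⟩, hXmin⟩ := exists_min_bad ⟨Set.univ, hVbad⟩
    -- find a crossing arc from X ∩ S to X \ S
    have hd1 : p (X \ S) + 1 ≤ dinOn tl hd A' (X \ S) := by
      have hsubset : insert (0 : Fin (k + 1)) (Fin.succ '' {i : Fin k | r i.succ ∉ X \ S})
          ⊆ {i : Fin (k + 1) | r i ∉ X \ S} := by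
        rintro i (rfl | ⟨j, hj, rfl⟩)
        · intro hmem; exact hmem.2 hrS
        · exact hj
      have hnot0 : (0 : Fin (k + 1)) ∉ Fin.succ '' {i : Fin k | r i.succ ∉ X \ S} := by
        rintro ⟨j, _, hj⟩
        exact (Fin.succ_ne_zero j) hj
      have hcard : (insert (0 : Fin (k + 1)) (Fin.succ '' {i : Fin k | r i.succ ∉ X \ S})).ncard
          = p (X \ S) + 1 := by
        rw [Set.ncard_insert_of_notMem hnot0 (Set.toFinite _),
          Set.ncard_image_of_injective _ (Fin.succ_injective k)]
      have hle : (insert (0 : Fin (k + 1)) (Fin.succ '' {i : Fin k | r i.succ ∉ X \ S})).ncard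
          ≤ ({i : Fin (k + 1) | r i ∉ X \ S}).ncard :=
        Set.ncard_le_ncard hsubset (Set.toFinite _)
      have := hcond (X \ S) hXS
      omega
    have heq : dinOn tl hd (A' \ B1) (X \ S) = dinOn tl hd A' (X \ S) := by
      unfold dinOn
      congr 1
      ext a
      simp only [Set.mem_setOf_eq, Set.mem_diff]
      constructor
      · rintro ⟨⟨hA, _⟩, h2⟩; exact ⟨hA, h2⟩
      · rintro ⟨hA, h2⟩
        exact ⟨⟨hA, fun hB => h2.2.2 ((hBS a hB).2)⟩, h2⟩
    have hstep : ∃ a, a ∈ A' \ B1 ∧ tl a ∈ X ∩ S ∧ hd a ∈ X \ S := by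
      by_contra hno
      push_neg at hno
      have hEsub : {a | a ∈ A' \ B1 ∧ tl a ∉ X \ S ∧ hd a ∈ X \ S}
          ⊆ {a | a ∈ A' \ B1 ∧ tl a ∉ X ∧ hd a ∈ X} := by
        rintro a ⟨hA, htl, hhd⟩
        refine ⟨hA, ?_, hhd.1⟩
        intro htlX
        have htlS : tl a ∈ S := by
          by_contra h
          exact htl ⟨htlX, h⟩
        exact hno a hA ⟨htlX, htlS⟩ hhd
      have hle := Set.ncard_le_ncard hEsub (Set.toFinite _)
      have hpX : p X ≤ p (X \ S) := by
        apply Set.ncard_le_ncard _ (Set.toFinite _)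
        intro i hi hmem
        exact hi hmem.1
      have h1 : dinOn tl hd (A' \ B1) (X \ S) ≤ dinOn tl hd (A' \ B1) X := hle
      omega
    obtain ⟨a₀, ha₀A, ha₀tl, ha₀hd⟩ := hstep
    set B1' : Set A := insert a₀ B1 with hB1'
    set S' : Set V := insert (hd a₀) S with hS'
    have ha₀X : tl a₀ ∈ X := ha₀tl.1
    have ha₀S : tl a₀ ∈ S := ha₀tl.2
    have hhdX : hd a₀ ∈ X := ha₀hd.1
    have hhdS : hd a₀ ∉ S := ha₀hd.2
    -- the extended arborescence
    have harb' : IsArbOn tl hd B1' (r 0) S' := by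
      refine ⟨Or.inr hrS, ?_, ?_, ?_, ?_⟩
      · rintro a (rfl | haB)
        · exact ⟨Or.inr ha₀S, Or.inl rfl⟩
        · exact ⟨Or.inr (hBS a haB).1, Or.inr (hBS a haB).2⟩
      · rintro a (rfl | haB)
        · exact fun h => hhdS (h ▸ hrS)
        · exact hnr a haB
      · rintro v (rfl | hvS) hvne
        · refine ⟨a₀, ⟨Or.inl rfl, rfl⟩, ?_⟩
          rintro b ⟨(rfl | hbB), hbhd⟩
          · rfl
          · exact absurd (hbhd ▸ (hBS b hbB).2) hhdS
        · obtain ⟨b, ⟨hbB, hbhd⟩, hbuniq⟩ := huniq v hvS hvne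
          refine ⟨b, ⟨Or.inr hbB, hbhd⟩, ?_⟩
          rintro c ⟨(rfl | hcB), hchd⟩
          · exact absurd (hchd ▸ hvS) hhdS
          · exact hbuniq c ⟨hcB, hchd⟩
      · have hmono : ∀ v ∈ S,
            Relation.ReflTransGen (fun x y => ∃ a ∈ B1', tl a = x ∧ hd a = y) (r 0) v := by
          intro v hv
          exact Relation.ReflTransGen.mono (r := fun x y => ∃ a ∈ B1, tl a = x ∧ hd a = y) (p := fun x y => ∃ a ∈ B1', tl a = x ∧ hd a = y) (fun x y ⟨a, ha, h⟩ => ⟨a, Or.inr ha, h⟩) _ _ (hreach v hv)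
        rintro v (rfl | hvS)
        · exact (hmono (tl a₀) ha₀S).tail ⟨a₀, Or.inl rfl, rfl, rfl⟩
        · exact hmono v hvS
    -- the invariant is preserved
    have hinv' : ∀ Z : Set V, Z.Nonempty →
        ({i : Fin k | r i.succ ∉ Z}).ncard ≤ dinOn tl hd (A' \ B1') Z := by
      intro Z hZne
      by_cases htight : dinOn tl hd (A' \ B1) Z = p Z
      · have henter : ¬ (tl a₀ ∉ Z ∧ hd a₀ ∈ Z) := by
          rintro ⟨htlZ, hhdZ⟩
          have hXZne : (X ∩ Z).Nonempty := ⟨hd a₀, hhdX, hhdZ⟩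
          have hXZune : (X ∪ Z).Nonempty := hXne.mono Set.subset_union_left
          have hU := hinv (X ∪ Z) hXZune
          have hI := hinv (X ∩ Z) hXZne
          have hsubm := dinOn_submod tl hd (A' \ B1) X Z
          have hmod := p_modular (fun i : Fin k => r i.succ) X Z
          simp only [hp] at *
          have htZ : dinOn tl hd (A' \ B1) (X ∩ Z) = ({i : Fin k | r i.succ ∉ X ∩ Z}).ncard := by
            omega
          have hbadXZ : Bad (X ∩ Z) :=
            ⟨hXZne, htZ, ⟨hd a₀, ⟨hhdX, hhdZ⟩, hhdS⟩⟩
          have hXeq := hXmin (X ∩ Z) hbadXZ Set.inter_subset_left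
          have hmem2 : tl a₀ ∈ X ∩ Z := by rw [hXeq]; exact ha₀X
          exact htlZ hmem2.2
        have hseteq : {a | a ∈ A' \ B1' ∧ tl a ∉ Z ∧ hd a ∈ Z}
            = {a | a ∈ A' \ B1 ∧ tl a ∉ Z ∧ hd a ∈ Z} := by
          ext a
          simp only [Set.mem_setOf_eq, Set.mem_diff, hB1', Set.mem_insert_iff]
          constructor
          · rintro ⟨⟨hA, hnB⟩, h⟩
            exact ⟨⟨hA, fun hB => hnB (Or.inr hB)⟩, h⟩
          · rintro ⟨⟨hA, hnB⟩, h⟩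
            refine ⟨⟨hA, ?_⟩, h⟩
            rintro (rfl | hB)
            · exact henter h
            · exact hnB hB
        have hde : dinOn tl hd (A' \ B1') Z = dinOn tl hd (A' \ B1) Z := by
          unfold dinOn
          rw [hseteq]
        rw [hde, htight]
      · have h1 : p Z + 1 ≤ dinOn tl hd (A' \ B1) Z := by
          have := hinv Z hZne
          simp only [hp] at *
          omega
        have hsub2 : {a | a ∈ A' \ B1 ∧ tl a ∉ Z ∧ hd a ∈ Z}
            ⊆ insert a₀ {a | a ∈ A' \ B1' ∧ tl a ∉ Z ∧ hd a ∈ Z} := by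
          rintro a ⟨⟨hA, hnB⟩, h⟩
          by_cases ha : a = a₀
          · exact Or.inl ha
          · refine Or.inr ⟨⟨hA, ?_⟩, h⟩
            rintro (rfl | hB)
            · exact ha rfl
            · exact hnB hB
        have h2 : dinOn tl hd (A' \ B1) Z
            ≤ dinOn tl hd (A' \ B1') Z + 1 := by
          calc dinOn tl hd (A' \ B1) Z
              ≤ (insert a₀ {a | a ∈ A' \ B1' ∧ tl a ∉ Z ∧ hd a ∈ Z}).ncard :=
                Set.ncard_le_ncard hsub2 (Set.toFinite _)
            _ ≤ dinOn tl hd (A' \ B1') Z + 1 := Set.ncard_insert_le _ _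
        simp only [hp] at h1
        omega
    -- termination
    have hnle : (Set.univ \ S' : Set V).ncard ≤ n := by
      have hss : (Set.univ \ S' : Set V) ⊂ Set.univ \ S := by
        refine (Set.ssubset_iff_of_subset ?_).mpr ⟨hd a₀, ⟨trivial, hhdS⟩, ?_⟩
        · intro v hv
          exact ⟨trivial, fun hvS => hv.2 (Or.inr hvS)⟩
        · intro hmem
          exact hmem.2 (Or.inl rfl)
      have := Set.ncard_lt_ncard hss (Set.toFinite _)
      omega
    exact ih B1' S' hnle (by
        rintro a (rfl | haB)
        · exact ha₀A.1
        · exact hsub haB) harb' hinv'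

lemma greedy (tl hd : A → V) (A' : Set A) (k : ℕ) (r : Fin (k + 1) → V)
    (hcond : ∀ X : Set V, X.Nonempty → ({i | r i ∉ X}).ncard ≤ dinOn tl hd A' X) :
    ∃ B1 : Set A, B1 ⊆ A' ∧ IsArbOn tl hd B1 (r 0) Set.univ ∧
      ∀ X : Set V, X.Nonempty →
        ({i : Fin k | r i.succ ∉ X}).ncard ≤ dinOn tl hd (A' \ B1) X := by
  classical
  have h0 : IsArbOn tl hd (∅ : Set A) (r 0) {r 0} := by
    refine ⟨rfl, ?_, ?_, ?_, ?_⟩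
    · intro a ha; exact absurd ha (Set.notMem_empty a)
    · intro a ha; exact absurd ha (Set.notMem_empty a)
    · intro v hv hvne; exact absurd hv hvne
    · intro v hv
      rw [Set.mem_singleton_iff] at hv
      subst hv
      exact Relation.ReflTransGen.refl
  have hinv0 : ∀ X : Set V, X.Nonempty →
      ({i : Fin k | r i.succ ∉ X}).ncard ≤ dinOn tl hd (A' \ (∅ : Set A)) X := by
    intro X hX
    have h1 := hcond X hX
    have hmap : ({i : Fin k | r i.succ ∉ X}).ncard ≤ ({i : Fin (k + 1) | r i ∉ X}).ncard :=
      Set.ncard_le_ncard_of_injOn Fin.succ (fun i hi => hi)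
        ((Fin.succ_injective k).injOn) (Set.toFinite _)
    rw [Set.diff_empty]
    omega
  exact grow tl hd A' k r hcond (Set.univ \ {r 0}).ncard ∅ {r 0} le_rfl
    (Set.empty_subset A') h0 hinv0

lemma packing (tl hd : A → V) : ∀ (k : ℕ) (r : Fin k → V) (A' : Set A),
    (∀ X : Set V, X.Nonempty → ({i | r i ∉ X}).ncard ≤ dinOn tl hd A' X) →
    ∃ B : Fin k → Set A, (∀ i, B i ⊆ A') ∧ (∀ i j, i ≠ j → Disjoint (B i) (B j)) ∧
      ∀ i, IsArbOn tl hd (B i) (r i) Set.univ := by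
  intro k
  induction k with
  | zero =>
    intro r A' _
    exact ⟨fun i => i.elim0, fun i => i.elim0, fun i => i.elim0, fun i => i.elim0⟩
  | succ k ih =>
    intro r A' hcond
    obtain ⟨B1, hB1A, hB1arb, hB1inv⟩ := greedy tl hd A' k r hcond
    obtain ⟨B', hB'A, hB'dis, hB'arb⟩ := ih (fun i => r i.succ) (A' \ B1) hB1inv
    have hdisB1 : ∀ j, Disjoint B1 (B' j) := by
      intro j
      rw [Set.disjoint_left]
      intro a ha hb
      exact (hB'A j hb).2 ha
    refine ⟨Fin.cases B1 B', ?_, ?_, ?_⟩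
    · intro i
      obtain rfl | ⟨i, rfl⟩ := Fin.eq_zero_or_eq_succ i
      · simpa using hB1A
      · simpa using (hB'A i).trans Set.diff_subset
    · intro i j hij
      obtain rfl | ⟨i, rfl⟩ := Fin.eq_zero_or_eq_succ i <;>
        obtain rfl | ⟨j, rfl⟩ := Fin.eq_zero_or_eq_succ j
      · exact absurd rfl hij
      · simpa using hdisB1 j
      · simpa using (hdisB1 i).symm
      · simpa using hB'dis i j (fun h => hij (by rw [h]))
    · intro i
      obtain rfl | ⟨i, rfl⟩ := Fin.eq_zero_or_eq_succ i
      · simpa using hB1arb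
      · simpa using hB'arb i

end AuxProof

/-- **Edmonds' arborescence packing theorem.** In a digraph `D = (V,A)` with a multiset of
roots `r 0, …, r (k-1)`, there exist pairwise arc-disjoint spanning `r i`-arborescences
iff every nonempty `X ⊆ V` has in-degree at least the number of roots outside `X`. -/
theorem edmonds_arborescence_packing
    {V A : Type} [Fintype V] [Fintype A] [DecidableEq V]
    (tl hd : A → V) (hloopless : ∀ a, tl a ≠ hd a)
    (k : ℕ) (r : Fin k → V) :
    (∃ B : Fin k → Set A,
      (∀ i j, i ≠ j → Disjoint (B i) (B j)) ∧
      ∀ i, IsArbOn tl hd (B i) (r i) Set.univ) ↔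
    (∀ X : Set V, X.Nonempty → ({i | r i ∉ X}).ncard ≤ din tl hd X) := by
  classical
  constructor
  · rintro ⟨B, hdis, harb⟩ X hXne
    have key : ∀ i : Fin k, r i ∉ X → ∃ a, a ∈ B i ∧ tl a ∉ X ∧ hd a ∈ X := by
      intro i hri
      obtain ⟨x, hx⟩ := hXne
      exact cross_lemma ((harb i).2.2.2.2 x (Set.mem_univ x)) hri hx
    rcases Set.eq_empty_or_nonempty {i : Fin k | r i ∉ X} with hE | ⟨i0, hi0⟩
    · simp [din, hE]
    have hne : Nonempty A := ⟨(key i0 hi0).choose⟩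
    choose! f hf using key
    have hgoal : ({i | r i ∉ X}).ncard ≤ ({a | tl a ∉ X ∧ hd a ∈ X}).ncard := by
      apply Set.ncard_le_ncard_of_injOn f _ _ (Set.toFinite _)
      · intro i hi
        exact ⟨(hf i hi).2.1, (hf i hi).2.2⟩
      · intro i hi j hj hij_eq
        by_contra hne
        exact (Set.disjoint_left.mp (hdis i j hne) (hf i hi).1) (hij_eq ▸ (hf j hj).1)
    exact hgoal
  · intro hcond
    obtain ⟨B, _, hdis, harb⟩ := packing tl hd k r Set.univ (by
      intro X hX
      rw [← din_eq_dinOn]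
      exact hcond X hX)
    exact ⟨B, hdis, harb⟩
end

section
/- In a digraph D = (V,A) with a multiset R = {r_1, ..., r_k} ⊆ V, there exist pairwise arc-disjoint maximal r_i-arborescences (i = 1,...,k) if and only if for every nonempty X ⊆ V, d_A^-(X) ≥ |{r_i : r_i ∈ W(X) \ X}|, where W(X) = X ∪ {v ∈ V \ X : X is reachable from v}. -/
open Set

set_option linter.unusedSectionVars false
namespace KKTaux

variable {V A : Type} [Fintype V] [Fintype A]

section Counting

variable (tl hd : A → V) {k : ℕ} (Z U : Fin k → Set V)

open Classical in
/-- arcs of `A'` entering `X` -/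
noncomputable def ent (A' : Finset A) (X : Set V) : Finset A :=
  A'.filter (fun a => tl a ∉ X ∧ hd a ∈ X)

noncomputable def dd (A' : Finset A) (X : Set V) : ℕ := (ent tl hd A' X).card

open Classical in
/-- demand set of `X` -/
noncomputable def DemF (X : Set V) : Finset (Fin k) :=
  Finset.univ.filter (fun i => X ∩ Z i = ∅ ∧ (X ∩ U i).Nonempty)

noncomputable def pp (X : Set V) : ℕ := (DemF Z U X).card

def Star (A' : Finset A) : Prop :=
  ∀ X : Set V, X.Nonempty → pp Z U X ≤ dd tl hd A' X

def OC (A' : Finset A) : Prop :=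
  ∀ a ∈ A', ∀ i, tl a ∈ U i → hd a ∈ U i

end Counting

section Lemmas

variable {tl hd : A → V} {k : ℕ} {Z U : Fin k → Set V} {A' : Finset A}

open Classical

lemma mem_ent {a : A} {X : Set V} :
    a ∈ ent tl hd A' X ↔ a ∈ A' ∧ tl a ∉ X ∧ hd a ∈ X := by
  simp [ent]

lemma mem_DemF {i : Fin k} {X : Set V} :
    i ∈ DemF Z U X ↔ X ∩ Z i = ∅ ∧ (X ∩ U i).Nonempty := by
  simp [DemF]

lemma dd_submod (X Y : Set V) :
    dd tl hd A' (X ∪ Y) + dd tl hd A' (X ∩ Y) ≤ dd tl hd A' X + dd tl hd A' Y := by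
  classical
  unfold dd ent
  rw [Finset.card_filter, Finset.card_filter, Finset.card_filter, Finset.card_filter,
    ← Finset.sum_add_distrib, ← Finset.sum_add_distrib]
  apply Finset.sum_le_sum
  intro a _
  by_cases hx : tl a ∈ X <;> by_cases hy : tl a ∈ Y <;>
    by_cases gx : hd a ∈ X <;> by_cases gy : hd a ∈ Y <;>
    simp [Set.mem_union, Set.mem_inter_iff, hx, hy, gx, gy]

lemma pp_supermod {X Y : Set V}
    (h : ∀ m ∈ DemF Z U X ∪ DemF Z U Y, (X ∩ Y ∩ U m).Nonempty) :
    pp Z U X + pp Z U Y ≤ pp Z U (X ∪ Y) + pp Z U (X ∩ Y) := by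
  classical
  have h1 : DemF Z U X ∩ DemF Z U Y ⊆ DemF Z U (X ∪ Y) := by
    intro m hm
    rw [Finset.mem_inter] at hm
    obtain ⟨hm1, hm2⟩ := hm
    rw [mem_DemF] at hm1 hm2 ⊢
    constructor
    · rw [Set.union_inter_distrib_right, hm1.1, hm2.1, Set.union_empty]
    · obtain ⟨w, hw1, hw2⟩ := hm1.2
      exact ⟨w, Or.inl hw1, hw2⟩
  have h2 : DemF Z U X ∪ DemF Z U Y ⊆ DemF Z U (X ∩ Y) := by
    intro m hm
    have hmem := h m hm
    rw [Finset.mem_union] at hm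
    rw [mem_DemF]
    refine ⟨?_, hmem⟩
    rcases hm with hm | hm <;> rw [mem_DemF] at hm
    · have : X ∩ Y ∩ Z m ⊆ X ∩ Z m := by
        intro w hw; exact ⟨hw.1.1, hw.2⟩
      rw [hm.1] at this; exact Set.subset_empty_iff.mp this
    · have : X ∩ Y ∩ Z m ⊆ Y ∩ Z m := by
        intro w hw; exact ⟨hw.1.2, hw.2⟩
      rw [hm.1] at this; exact Set.subset_empty_iff.mp this
  calc pp Z U X + pp Z U Y
      = (DemF Z U X ∪ DemF Z U Y).card + (DemF Z U X ∩ DemF Z U Y).card := by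
        rw [Finset.card_union_add_card_inter]; rfl
    _ ≤ pp Z U (X ∩ Y) + pp Z U (X ∪ Y) := by
        exact Nat.add_le_add (Finset.card_le_card h2) (Finset.card_le_card h1)
    _ = pp Z U (X ∪ Y) + pp Z U (X ∩ Y) := by ring

end Lemmas

section Trim

variable {tl hd : A → V} {k : ℕ} {Z U : Fin k → Set V} {A' : Finset A}

open Classical

lemma ent_diff_eq {T S : Set V} {D : Finset (Fin k)}
    (hoc : OC tl hd U A') (hS : S = {w | ∃ m ∈ D, w ∈ U m}) :
    ent tl hd A' (T \ S) = (ent tl hd A' T).filter (fun a => hd a ∉ S) := by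
  ext a
  simp only [mem_ent, Finset.mem_filter]
  constructor
  · rintro ⟨ha, htl, hhd⟩
    have hdT : hd a ∈ T := hhd.1
    have hdS : hd a ∉ S := hhd.2
    refine ⟨⟨ha, ?_, hdT⟩, hdS⟩
    intro htlT
    have htlS : tl a ∈ S := by
      by_contra hc
      exact htl ⟨htlT, hc⟩
    rw [hS] at htlS
    obtain ⟨m, hm, htlU⟩ := htlS
    have := hoc a ha m htlU
    apply hdS
    rw [hS]
    exact ⟨m, hm, this⟩
  · rintro ⟨⟨ha, htl, hdT⟩, hdS⟩
    exact ⟨ha, fun hc => htl hc.1, hdT, hdS⟩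

lemma trim (hstar : Star tl hd Z U A') (hoc : OC tl hd U A')
    (hZU : ∀ i, Z i ⊆ U i) {T : Set V}
    (htight : dd tl hd A' T = pp Z U T)
    {D : Finset (Fin k)}
    {S : Set V} (hS : S = {w | ∃ m ∈ D, w ∈ U m})
    (hne : (T \ S).Nonempty) :
    dd tl hd A' (T \ S) = pp Z U (T \ S) ∧
    DemF Z U (T \ S) =
      DemF Z U T \ (DemF Z U T).filter (fun m => U m ∩ T ⊆ S) := by
  set M : Finset (Fin k) := (DemF Z U T).filter (fun m => U m ∩ T ⊆ S) with hM
  have hMsub : M ⊆ DemF Z U T := Finset.filter_subset _ _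
  set h : ℕ := ((ent tl hd A' T).filter (fun a => hd a ∈ S)).card with hh
  -- (a)  dd (T\S) + h = dd T
  have e1 : dd tl hd A' (T \ S) + h = dd tl hd A' T := by
    have key : dd tl hd A' (T \ S)
        = ((ent tl hd A' T).filter (fun a => ¬ hd a ∈ S)).card := by
      rw [dd, ent_diff_eq hoc hS]
    have key2 := Finset.card_filter_add_card_filter_not
      (s := ent tl hd A' T) (p := fun a => hd a ∈ S)
    have key3 : dd tl hd A' T = (ent tl hd A' T).card := rfl
    omega
  -- (b)  M.card ≤ h
  have e2 : M.card ≤ h := by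
    set SM : Set V := {w | ∃ m ∈ M, w ∈ U m} with hSM
    set Q : Set V := (SM \ T)ᶜ with hQ
    have hTQ : T ⊆ Q := by
      intro w hw
      simp only [hQ, Set.mem_compl_iff, Set.mem_diff, not_and, not_not]
      intro _; exact hw
    have hQne : Q.Nonempty := hne.mono (fun w hw => hTQ hw.1)
    have hMQ : M ⊆ DemF Z U Q := by
      intro m hm
      have hmT : m ∈ DemF Z U T := hMsub hm
      rw [mem_DemF] at hmT ⊢
      constructor
      · ext w
        simp only [Set.mem_inter_iff, Set.mem_empty_iff_false, iff_false, not_and]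
        intro hwQ hwZ
        have hwU : w ∈ U m := hZU m hwZ
        have hwSM : w ∈ SM := ⟨m, hm, hwU⟩
        have hwT : w ∈ T := by
          by_contra hc
          exact hwQ ⟨hwSM, hc⟩
        have : w ∈ T ∩ Z m := ⟨hwT, hwZ⟩
        rw [hmT.1] at this
        exact this
      · obtain ⟨w, hw1, hw2⟩ := hmT.2
        exact ⟨w, hTQ hw1, hw2⟩
    have hentQ : ent tl hd A' Q ⊆ (ent tl hd A' T).filter (fun a => hd a ∈ S) := by
      intro a ha
      rw [mem_ent] at ha
      obtain ⟨haA, htlQ, hhdQ⟩ := ha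
      have htlSM : tl a ∈ SM \ T := by
        by_contra hc
        exact htlQ hc
      obtain ⟨m, hm, htlU⟩ := htlSM.1
      have hhdU : hd a ∈ U m := hoc a haA m htlU
      have hhdSM : hd a ∈ SM := ⟨m, hm, hhdU⟩
      have hhdT : hd a ∈ T := by
        by_contra hc
        exact hhdQ ⟨hhdSM, hc⟩
      have hmS : U m ∩ T ⊆ S := (Finset.mem_filter.mp hm).2
      refine Finset.mem_filter.mpr ⟨mem_ent.mpr ⟨haA, htlSM.2, hhdT⟩, hmS ⟨hhdU, hhdT⟩⟩
    calc M.card ≤ (DemF Z U Q).card := Finset.card_le_card hMQ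
      _ = pp Z U Q := rfl
      _ ≤ dd tl hd A' Q := hstar Q hQne
      _ ≤ h := Finset.card_le_card hentQ
  -- (c)
  have e3 : DemF Z U T \ M ⊆ DemF Z U (T \ S) := by
    intro m hm
    rw [Finset.mem_sdiff] at hm
    obtain ⟨hmT, hmM⟩ := hm
    have hmT' := mem_DemF.mp hmT
    rw [mem_DemF]
    constructor
    · have : (T \ S) ∩ Z m ⊆ T ∩ Z m := fun w hw => ⟨hw.1.1, hw.2⟩
      rw [hmT'.1] at this
      exact Set.subset_empty_iff.mp this
    · have hns : ¬ U m ∩ T ⊆ S := by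
        intro hc
        exact hmM (Finset.mem_filter.mpr ⟨hmT, hc⟩)
      obtain ⟨w, hw, hwS⟩ := Set.not_subset.mp hns
      exact ⟨w, ⟨hw.2, hwS⟩, hw.1⟩
  -- (d) conclude
  have e4 : (DemF Z U T \ M).card + M.card = pp Z U T := by
    rw [pp]; exact Finset.card_sdiff_add_card_eq_card hMsub
  have e5 : pp Z U (T \ S) ≤ dd tl hd A' (T \ S) := hstar _ hne
  have e6 : (DemF Z U T \ M).card ≤ pp Z U (T \ S) := Finset.card_le_card e3
  have hhM : h = M.card := by omega
  have e7 : dd tl hd A' (T \ S) = (DemF Z U T \ M).card := by omega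
  have e8 : pp Z U (T \ S) = (DemF Z U T \ M).card := by omega
  refine ⟨by omega, ?_⟩
  exact (Finset.eq_of_subset_of_card_le e3 (le_of_eq e8)).symm

end Trim


section GoodArc

variable {tl hd : A → V} {k : ℕ} {Z U : Fin k → Set V} {A' : Finset A}

open Classical

/-- candidate arc for growing tree `t` -/
def Cand (tl hd : A → V) (Z U : Fin k → Set V) (A' : Finset A) (t : Fin k) (a : A) : Prop :=
  a ∈ A' ∧ tl a ∈ Z t ∧ hd a ∈ U t \ Z t

/-- `a` is bad: some tight set meeting `Z t` contains its head but not its tail -/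
def Bad (tl hd : A → V) (Z U : Fin k → Set V) (A' : Finset A) (t : Fin k) (a : A) : Prop :=
  ∃ X : Set V, dd tl hd A' X = pp Z U X ∧ hd a ∈ X ∧ tl a ∉ X ∧ (X ∩ Z t).Nonempty

lemma Zt_nonempty_of_not_dem {t : Fin k} {W : Set V} (h : t ∉ DemF Z U W)
    (hU : (W ∩ U t).Nonempty) : (W ∩ Z t).Nonempty := by
  rcases Set.eq_empty_or_nonempty (W ∩ Z t) with he | hne
  · exact absurd (mem_DemF.mpr ⟨he, hU⟩) h
  · exact hne

lemma t_not_dem {t : Fin k} {W : Set V} (h : (W ∩ Z t).Nonempty) :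
    t ∉ DemF Z U W := by
  intro hc
  rw [(mem_DemF.mp hc).1] at h
  exact Set.not_nonempty_empty h

lemma cand_exists (hstar : Star tl hd Z U A') (hoc : OC tl hd U A')
    (hZU : ∀ i, Z i ⊆ U i) (t : Fin k) (hUt : (U t \ Z t).Nonempty) :
    ∃ a, Cand tl hd Z U A' t a := by
  obtain ⟨v, hv⟩ := hUt
  have ht : t ∈ DemF Z U ((Z t)ᶜ) := by
    rw [mem_DemF]
    exact ⟨Set.compl_inter_self (Z t), ⟨v, hv.2, hv.1⟩⟩
  have hpp : 1 ≤ pp Z U ((Z t)ᶜ) := Finset.card_pos.mpr ⟨t, ht⟩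
  have hne : ((Z t)ᶜ : Set V).Nonempty := ⟨v, hv.2⟩
  have hdd : 1 ≤ dd tl hd A' ((Z t)ᶜ) := le_trans hpp (hstar _ hne)
  obtain ⟨a, ha⟩ := Finset.card_pos.mp hdd
  rw [mem_ent] at ha
  obtain ⟨haA, hat, hah⟩ := ha
  have htl : tl a ∈ Z t := by simpa using hat
  exact ⟨a, haA, htl, hoc a haA t (hZU t htl), by simpa using hah⟩

lemma good_arc (hstar : Star tl hd Z U A') (hoc : OC tl hd U A')
    (hZU : ∀ i, Z i ⊆ U i) (t : Fin k) (hUt : (U t \ Z t).Nonempty) :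
    ∃ a, Cand tl hd Z U A' t a ∧ ¬ Bad tl hd Z U A' t a := by
  by_contra hno
  push_neg at hno
  -- family of certificates
  set 𝒞 : Set (Set V) := {X | ∃ a, Cand tl hd Z U A' t a ∧ dd tl hd A' X = pp Z U X ∧
      hd a ∈ X ∧ tl a ∉ X ∧ (X ∩ Z t).Nonempty} with h𝒞
  have h𝒞ne : 𝒞.Nonempty := by
    obtain ⟨a, ha⟩ := cand_exists hstar hoc hZU t hUt
    obtain ⟨X, hX⟩ := hno a ha
    exact ⟨X, a, ha, hX⟩
  obtain ⟨Y, hY𝒞, hYmin⟩ := (Set.toFinite 𝒞).exists_minimalFor Set.ncard 𝒞 h𝒞ne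
  have hmin : ∀ X ∈ 𝒞, X ⊆ Y → X = Y := by
    intro X hX hXY
    have h1 : X.ncard ≤ Y.ncard := Set.ncard_le_ncard hXY (Set.toFinite Y)
    have h2 : X.ncard = Y.ncard := le_antisymm h1 (hYmin hX h1)
    exact Set.eq_of_subset_of_ncard_le hXY (le_of_eq h2.symm) (Set.toFinite Y)
  obtain ⟨a₀, hCa₀, hYtight, hvY, hzY, hYZt⟩ := hY𝒞
  have hvUZ : hd a₀ ∈ U t \ Z t := hCa₀.2.2
  -- Step N : every demand territory of the minimal certificate contains v = hd a₀
  have hNorm : ∀ m ∈ DemF Z U Y, hd a₀ ∈ U m := by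
    by_contra hn
    push_neg at hn
    obtain ⟨m₀, hm₀D, hm₀v⟩ := hn
    set D : Finset (Fin k) := (DemF Z U Y).filter (fun m => hd a₀ ∉ U m) with hD
    set S : Set V := {w | ∃ m ∈ D, w ∈ U m} with hSdef
    have hvS : hd a₀ ∉ S := by
      rintro ⟨m, hm, hvm⟩
      exact (Finset.mem_filter.mp hm).2 hvm
    have hne' : (Y \ S).Nonempty := ⟨hd a₀, hvY, hvS⟩
    obtain ⟨htight', hDem'⟩ := trim hstar hoc hZU hYtight (D := D) rfl hne'
    have hYS𝒞 : Y \ S ∈ 𝒞 := by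
      refine ⟨a₀, hCa₀, htight', ⟨hvY, hvS⟩, fun hc => hzY hc.1, ?_⟩
      apply Zt_nonempty_of_not_dem (t := t)
      · rw [hDem']
        intro hc
        exact t_not_dem hYZt (Finset.mem_sdiff.mp hc).1
      · exact ⟨hd a₀, ⟨hvY, hvS⟩, hvUZ.1⟩
    have heq : Y \ S = Y := hmin _ hYS𝒞 Set.diff_subset
    obtain ⟨w, hwY, hwU⟩ := (mem_DemF.mp hm₀D).2
    have hwS : w ∈ S := ⟨m₀, Finset.mem_filter.mpr ⟨hm₀D, hm₀v⟩, hwU⟩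
    have : w ∈ Y \ S := by rw [heq]; exact hwY
    exact this.2 hwS
  -- Step I : internal candidate
  set S₀ : Set V := Y \ Z t with hS₀
  have hvS₀ : hd a₀ ∈ S₀ := ⟨hvY, hvUZ.2⟩
  have hS₀ne : S₀.Nonempty := ⟨hd a₀, hvS₀⟩
  have htY : t ∉ DemF Z U Y := t_not_dem hYZt
  have hppS₀ : pp Z U Y + 1 ≤ pp Z U S₀ := by
    have hsub : insert t (DemF Z U Y) ⊆ DemF Z U S₀ := by
      intro m hm
      rcases Finset.mem_insert.mp hm with rfl | hm
      · exact mem_DemF.mpr ⟨by rw [hS₀]; exact Set.diff_inter_self,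
          ⟨hd a₀, hvS₀, hvUZ.1⟩⟩
      · refine mem_DemF.mpr ⟨?_, ⟨hd a₀, hvS₀, hNorm m hm⟩⟩
        have h1 := (mem_DemF.mp hm).1
        have : S₀ ∩ Z m ⊆ Y ∩ Z m := fun w hw => ⟨hw.1.1, hw.2⟩
        rw [h1] at this
        exact Set.subset_empty_iff.mp this
    calc pp Z U Y + 1 = (insert t (DemF Z U Y)).card := by
          rw [Finset.card_insert_of_notMem htY]; rfl
      _ ≤ pp Z U S₀ := Finset.card_le_card hsub
  have hddS₀ : dd tl hd A' S₀ ≤ dd tl hd A' Y +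
      (A'.filter (fun a => tl a ∈ Y ∩ Z t ∧ hd a ∈ S₀)).card := by
    unfold dd ent
    rw [Finset.card_filter, Finset.card_filter, Finset.card_filter,
      ← Finset.sum_add_distrib]
    apply Finset.sum_le_sum
    intro a _
    by_cases h1 : tl a ∈ Y <;> by_cases h2 : tl a ∈ Z t <;> by_cases h3 : hd a ∈ Y <;>
      by_cases h4 : hd a ∈ Z t <;>
      simp [hS₀, Set.mem_diff, Set.mem_inter_iff, h1, h2, h3, h4]
  have hα : 1 ≤ (A'.filter (fun a => tl a ∈ Y ∩ Z t ∧ hd a ∈ S₀)).card := by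
    have := hstar S₀ hS₀ne
    omega
  obtain ⟨e, he⟩ := Finset.card_pos.mp hα
  rw [Finset.mem_filter] at he
  obtain ⟨heA, hetl, hehd⟩ := he
  have heU : hd e ∈ U t := hoc e heA t (hZU t hetl.2)
  have hCe : Cand tl hd Z U A' t e := ⟨heA, hetl.2, heU, hehd.2⟩
  -- Step F : finish
  obtain ⟨Y₂, hY₂tight, hv₂Y₂, hz₂Y₂, hY₂Zt⟩ := hno e hCe
  set b : Set V := Y ∩ Y₂ with hb
  have hv₂b : hd e ∈ b := ⟨hehd.1, hv₂Y₂⟩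
  -- trim Y around b
  have htrim : ∀ (W : Set V), dd tl hd A' W = pp Z U W → hd e ∈ W →
      (W ∩ Z t).Nonempty →
      ∃ W' : Set V, W' ⊆ W ∧ dd tl hd A' W' = pp Z U W' ∧ (b ∩ W) ⊆ W' ∧ hd e ∈ W' ∧
        (∀ m ∈ DemF Z U W', (b ∩ U m).Nonempty) ∧ (W' ∩ Z t).Nonempty := by
    intro W hWtight hv₂W hWZt
    set D : Finset (Fin k) := (DemF Z U W).filter (fun m => b ∩ U m = ∅) with hD
    set S : Set V := {w | ∃ m ∈ D, w ∈ U m} with hSdef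
    have hbS : ∀ w ∈ b, w ∉ S := by
      rintro w hw ⟨m, hm, hwU⟩
      have h0 := (Finset.mem_filter.mp hm).2
      have : w ∈ b ∩ U m := ⟨hw, hwU⟩
      rw [h0] at this
      exact this
    have hne' : (W \ S).Nonempty := ⟨hd e, hv₂W, hbS _ hv₂b⟩
    obtain ⟨htight', hDem'⟩ := trim hstar hoc hZU hWtight (D := D) rfl hne'
    refine ⟨W \ S, Set.diff_subset, htight', ?_, ⟨hv₂W, hbS _ hv₂b⟩, ?_, ?_⟩
    · intro w hw
      exact ⟨hw.2, hbS _ hw.1⟩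
    · intro m hm
      rw [hDem'] at hm
      obtain ⟨hm1, hm2⟩ := Finset.mem_sdiff.mp hm
      rcases Set.eq_empty_or_nonempty (b ∩ U m) with he0 | hne0
      · exfalso
        apply hm2
        refine Finset.mem_filter.mpr ⟨hm1, ?_⟩
        intro w hw
        exact ⟨m, Finset.mem_filter.mpr ⟨hm1, he0⟩, hw.1⟩
      · exact hne0
    · apply Zt_nonempty_of_not_dem (t := t)
      · rw [hDem']
        intro hc
        exact t_not_dem hWZt (Finset.mem_sdiff.mp hc).1
      · exact ⟨hd e, ⟨hv₂W, hbS _ hv₂b⟩, heU⟩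
  obtain ⟨Y', hY'sub, hY'tight, hbY', hv₂Y', hY'dem, hY'Zt⟩ :=
    htrim Y hYtight hehd.1 hYZt
  obtain ⟨Y₂', hY₂'sub, hY₂'tight, hbY₂', hv₂Y₂', hY₂'dem, hY₂'Zt⟩ :=
    htrim Y₂ hY₂tight hv₂Y₂ hY₂Zt
  have hbY'' : b ⊆ Y' := fun w hw => hbY' ⟨hw, hw.1⟩
  have hbY₂'' : b ⊆ Y₂' := fun w hw => hbY₂' ⟨hw, hw.2⟩
  have hinter : Y' ∩ Y₂' = b := by
    apply Set.Subset.antisymm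
    · intro w hw
      exact ⟨hY'sub hw.1, hY₂'sub hw.2⟩
    · intro w hw
      exact ⟨hbY'' hw, hbY₂'' hw⟩
  have hsupmodhyp : ∀ m ∈ DemF Z U Y' ∪ DemF Z U Y₂', (Y' ∩ Y₂' ∩ U m).Nonempty := by
    intro m hm
    rw [hinter]
    rcases Finset.mem_union.mp hm with hm | hm
    · exact hY'dem m hm
    · exact hY₂'dem m hm
  have hUne : (Y' ∪ Y₂' : Set V).Nonempty := ⟨hd e, Or.inl hv₂Y'⟩
  have hIne : (Y' ∩ Y₂' : Set V).Nonempty := ⟨hd e, hv₂Y', hv₂Y₂'⟩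
  have hsub := dd_submod (A' := A') (tl := tl) (hd := hd) Y' Y₂'
  have hstarU := hstar _ hUne
  rcases Set.eq_empty_or_nonempty (b ∩ Z t) with hcase | hcase
  · -- case (i): strict supermodularity, contradiction
    have htI : t ∈ DemF Z U (Y' ∩ Y₂') := by
      rw [mem_DemF, hinter]
      exact ⟨hcase, ⟨hd e, hv₂b, heU⟩⟩
    have htnotin : t ∉ DemF Z U Y' ∪ DemF Z U Y₂' := by
      intro hc
      rcases Finset.mem_union.mp hc with hc | hc
      · exact t_not_dem hY'Zt hc
      · exact t_not_dem hY₂'Zt hc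
    -- strict version of supermodularity
    have h1 : DemF Z U Y' ∩ DemF Z U Y₂' ⊆ DemF Z U (Y' ∪ Y₂') := by
      intro m hm
      obtain ⟨hm1, hm2⟩ := Finset.mem_inter.mp hm
      rw [mem_DemF] at hm1 hm2 ⊢
      constructor
      · rw [Set.union_inter_distrib_right, hm1.1, hm2.1, Set.union_empty]
      · obtain ⟨w, hw1, hw2⟩ := hm1.2
        exact ⟨w, Or.inl hw1, hw2⟩
    have h2 : DemF Z U Y' ∪ DemF Z U Y₂' ⊆ (DemF Z U (Y' ∩ Y₂')).erase t := by
      intro m hm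
      refine Finset.mem_erase.mpr ⟨fun hc => htnotin (hc ▸ hm), ?_⟩
      have hmem := hsupmodhyp m hm
      rw [mem_DemF]
      refine ⟨?_, hmem⟩
      rcases Finset.mem_union.mp hm with hm | hm <;> rw [mem_DemF] at hm
      · have : Y' ∩ Y₂' ∩ Z m ⊆ Y' ∩ Z m := fun w hw => ⟨hw.1.1, hw.2⟩
        rw [hm.1] at this; exact Set.subset_empty_iff.mp this
      · have : Y' ∩ Y₂' ∩ Z m ⊆ Y₂' ∩ Z m := fun w hw => ⟨hw.1.2, hw.2⟩
        rw [hm.1] at this; exact Set.subset_empty_iff.mp this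
    have hcard1 : pp Z U Y' + pp Z U Y₂'
        = (DemF Z U Y' ∪ DemF Z U Y₂').card + (DemF Z U Y' ∩ DemF Z U Y₂').card := by
      rw [Finset.card_union_add_card_inter]; rfl
    have hcard2 : (DemF Z U Y' ∪ DemF Z U Y₂').card + 1 ≤ pp Z U (Y' ∩ Y₂') := by
      have hle := Finset.card_le_card h2
      have := Finset.card_erase_add_one htI
      unfold pp
      omega
    have hcard3 : (DemF Z U Y' ∩ DemF Z U Y₂').card ≤ pp Z U (Y' ∪ Y₂') :=
      Finset.card_le_card h1
    have hstarI := hstar _ hIne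
    omega
  · -- case (ii): b is a smaller certificate
    have hppsup := pp_supermod (Z := Z) (U := U) hsupmodhyp
    have hstarb : pp Z U (Y' ∩ Y₂') ≤ dd tl hd A' (Y' ∩ Y₂') := hstar _ hIne
    have hbtight : dd tl hd A' (Y' ∩ Y₂') = pp Z U (Y' ∩ Y₂') := by omega
    have hb𝒞 : b ∈ 𝒞 := by
      refine ⟨e, hCe, hinter ▸ hbtight, hv₂b, fun hc => hz₂Y₂ hc.2, hcase⟩
    have hbeq : b = Y := hmin _ hb𝒞 Set.inter_subset_left
    have : tl e ∈ b := hbeq ▸ hetl.1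
    exact hz₂Y₂ this.2

end GoodArc


section Induction

variable {tl hd : A → V} {k : ℕ} {Z U : Fin k → Set V} {A' : Finset A}

open Classical

lemma ent_erase {a : A} {X : Set V} :
    ent tl hd (A'.erase a) X = (ent tl hd A' X).erase a := by
  ext x
  simp only [mem_ent, Finset.mem_erase]
  tauto

lemma star_step {t : Fin k} {a : A} (hstar : Star tl hd Z U A')
    (hC : Cand tl hd Z U A' t a) (hG : ¬ Bad tl hd Z U A' t a) :
    Star tl hd (Function.update Z t (Z t ∪ {hd a})) U (A'.erase a) := by
  intro X hXne
  set Z' := Function.update Z t (Z t ∪ {hd a}) with hZ'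
  have hZsub : ∀ i, Z i ⊆ Z' i := by
    intro i
    by_cases hi : i = t
    · subst hi; rw [hZ', Function.update_self]; exact Set.subset_union_left
    · rw [hZ', Function.update_of_ne hi]
  have hDemsub : DemF Z' U X ⊆ DemF Z U X := by
    intro i hi
    rw [mem_DemF] at hi ⊢
    refine ⟨?_, hi.2⟩
    have : X ∩ Z i ⊆ X ∩ Z' i := fun w hw => ⟨hw.1, hZsub i hw.2⟩
    rw [hi.1] at this
    exact Set.subset_empty_iff.mp this
  have hppmono : pp Z' U X ≤ pp Z U X := Finset.card_le_card hDemsub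
  by_cases henter : tl a ∉ X ∧ hd a ∈ X
  · have haent : a ∈ ent tl hd A' X := mem_ent.mpr ⟨hC.1, henter.1, henter.2⟩
    have hdd : dd tl hd (A'.erase a) X + 1 = dd tl hd A' X := by
      unfold dd
      rw [ent_erase]
      exact Finset.card_erase_add_one haent
    rcases Set.eq_empty_or_nonempty (X ∩ Z t) with hzt | hzt
    · -- demand of t drops
      have htin : t ∈ DemF Z U X := mem_DemF.mpr ⟨hzt, ⟨hd a, henter.2, hC.2.2.1⟩⟩
      have htout : t ∉ DemF Z' U X := by
        rw [mem_DemF]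
        rintro ⟨h1, -⟩
        have : hd a ∈ X ∩ Z' t := ⟨henter.2, by
          rw [hZ', Function.update_self]; exact Or.inr rfl⟩
        rw [h1] at this
        exact this
      have hsub2 : DemF Z' U X ⊆ (DemF Z U X).erase t := by
        intro i hi
        exact Finset.mem_erase.mpr ⟨fun hc => htout (hc ▸ hi), hDemsub hi⟩
      have h1 : pp Z' U X ≤ ((DemF Z U X).erase t).card := Finset.card_le_card hsub2
      have h2 := Finset.card_erase_add_one htin
      have h3 := hstar X hXne
      have h4 : pp Z U X = (DemF Z U X).card := rfl
      omega
    · -- X is not tight by goodness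
      have hnt : dd tl hd A' X ≠ pp Z U X := by
        intro hc
        exact hG ⟨X, hc, henter.2, henter.1, hzt⟩
      have h3 := hstar X hXne
      omega
  · have haout : a ∉ ent tl hd A' X := by
      rw [mem_ent]
      tauto
    have hdd : dd tl hd (A'.erase a) X = dd tl hd A' X := by
      unfold dd
      rw [ent_erase, Finset.erase_eq_of_notMem haout]
    rw [hdd]
    exact le_trans hppmono (hstar X hXne)

lemma suff (N : ℕ) : ∀ (A' : Finset A) (Z : Fin k → Set V),
    (∑ i, (U i \ Z i).ncard) = N →
    Star tl hd Z U A' → OC tl hd U A' → (∀ i, Z i ⊆ U i) →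
    ∃ B : Fin k → Finset A,
      (∀ i, B i ⊆ A') ∧
      (∀ i j, i ≠ j → Disjoint (B i) (B j)) ∧
      (∀ i, ∀ a ∈ B i, tl a ∈ U i ∧ hd a ∈ U i \ Z i) ∧
      (∀ i, ∀ v ∈ U i \ Z i, ∃! a, a ∈ B i ∧ hd a = v) ∧
      (∀ i, ∀ v ∈ U i, ∃ z ∈ Z i, Relation.ReflTransGen
          (fun x y => ∃ a ∈ B i, tl a = x ∧ hd a = y) z v) := by
  induction N using Nat.strong_induction_on with
  | _ N ih =>
    intro A' Z hN hstar hoc hZU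
    by_cases hdone : ∀ i, U i ⊆ Z i
    · refine ⟨fun _ => ∅, fun i => Finset.empty_subset _, fun i j _ => Finset.disjoint_empty_left _,
        fun i a ha => absurd ha (Finset.notMem_empty a), ?_, ?_⟩
      · intro i v hv
        exact absurd (hdone i hv.1) (fun hc => hv.2 hc)
      · intro i v hv
        exact ⟨v, hdone i hv, Relation.ReflTransGen.refl⟩
    · push_neg at hdone
      obtain ⟨t, ht⟩ := hdone
      have hUt : (U t \ Z t).Nonempty := Set.diff_nonempty.mpr ht
      obtain ⟨a, hC, hG⟩ := good_arc hstar hoc hZU t hUt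
      set Z' := Function.update Z t (Z t ∪ {hd a}) with hZ'
      have hZ't : Z' t = Z t ∪ {hd a} := by rw [hZ', Function.update_self]
      have hZ'i : ∀ i, i ≠ t → Z' i = Z i := fun i hi => Function.update_of_ne hi _ _
      have hZU' : ∀ i, Z' i ⊆ U i := by
        intro i
        by_cases hi : t = i
        · subst hi
          rw [hZ't]
          exact Set.union_subset (hZU t) (by
            intro w hw
            rw [Set.mem_singleton_iff] at hw
            subst hw
            exact hC.2.2.1)
        · rw [hZ'i i (Ne.symm hi)]; exact hZU i
      have hoc' : OC tl hd U (A'.erase a) :=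
        fun b hb i hbi => hoc b (Finset.mem_of_mem_erase hb) i hbi
      have hstar' : Star tl hd Z' U (A'.erase a) := star_step hstar hC hG
      have hZsub : ∀ i, Z i ⊆ Z' i := by
        intro i
        by_cases hi : t = i
        · subst hi; rw [hZ't]; exact Set.subset_union_left
        · rw [hZ'i i (Ne.symm hi)]
      have hmeas : (∑ i, (U i \ Z' i).ncard) < N := by
        rw [← hN]
        apply Finset.sum_lt_sum
        · intro i _
          exact Set.ncard_le_ncard (Set.diff_subset_diff_right (hZsub i)) (Set.toFinite _)
        · refine ⟨t, Finset.mem_univ t, Set.ncard_lt_ncard ?_ (Set.toFinite _)⟩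
          constructor
          · exact Set.diff_subset_diff_right (hZsub t)
          · intro hcon
            have h1 : hd a ∈ U t \ Z t := hC.2.2
            have h2 : hd a ∈ U t \ Z' t := hcon h1
            apply h2.2
            rw [hZ't]
            exact Or.inr rfl
      obtain ⟨B', hB'sub, hB'disj, hB'arcs, hB'uniq, hB'reach⟩ :=
        ih _ hmeas (A'.erase a) Z' rfl hstar' hoc' hZU'
      set B : Fin k → Finset A := Function.update B' t (insert a (B' t)) with hB
      have hBt : B t = insert a (B' t) := by rw [hB, Function.update_self]
      have hBi : ∀ i, i ≠ t → B i = B' i := fun i hi => Function.update_of_ne hi _ _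
      have hB'A : ∀ i, B' i ⊆ A' := fun i =>
        (hB'sub i).trans (Finset.erase_subset a A')
      have haB' : ∀ i, a ∉ B' i := fun i hc =>
        Finset.notMem_erase a A' (hB'sub i hc)
      refine ⟨B, ?_, ?_, ?_, ?_, ?_⟩
      · intro i
        by_cases hi : t = i
        · subst hi
          rw [hBt]
          exact Finset.insert_subset hC.1 (hB'A t)
        · rw [hBi i (Ne.symm hi)]; exact hB'A i
      · intro i j hij
        by_cases hi : t = i
        · subst hi
          rw [hBt, hBi j hij.symm, Finset.disjoint_insert_left]
          exact ⟨haB' j, hB'disj t j hij⟩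
        · by_cases hj : t = j
          · subst hj
            rw [hBt, hBi i (Ne.symm hi), Finset.disjoint_insert_right]
            exact ⟨haB' i, hB'disj i t hij⟩
          · rw [hBi i (Ne.symm hi), hBi j (Ne.symm hj)]
            exact hB'disj i j hij
      · intro i b hb
        by_cases hi : t = i
        · subst hi
          rw [hBt, Finset.mem_insert] at hb
          rcases hb with rfl | hb
          · exact ⟨hZU t hC.2.1, hC.2.2⟩
          · obtain ⟨h1, h2⟩ := hB'arcs t b hb
            refine ⟨h1, h2.1, fun hc => h2.2 ?_⟩
            rw [hZ't]
            exact Or.inl hc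
        · rw [hBi i (Ne.symm hi)] at hb
          have := hB'arcs i b hb
          rwa [hZ'i i (Ne.symm hi)] at this
      · intro i v hv
        by_cases hi : t = i
        · subst hi
          by_cases hva : v = hd a
          · subst hva
            refine ⟨a, ⟨by rw [hBt]; exact Finset.mem_insert_self a _, rfl⟩, ?_⟩
            rintro b ⟨hb, hbv⟩
            rw [hBt, Finset.mem_insert] at hb
            rcases hb with rfl | hb
            · rfl
            · exfalso
              have := (hB'arcs t b hb).2.2
              apply this
              rw [hZ't, hbv]
              exact Or.inr rfl
          · have hv' : v ∈ U t \ Z' t := by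
              refine ⟨hv.1, ?_⟩
              rw [hZ't]
              rintro (hc | hc)
              · exact hv.2 hc
              · exact hva hc
            obtain ⟨b, ⟨hb1, hb2⟩, hbu⟩ := hB'uniq t v hv'
            refine ⟨b, ⟨by rw [hBt]; exact Finset.mem_insert_of_mem hb1, hb2⟩, ?_⟩
            rintro c ⟨hc1, hc2⟩
            rw [hBt, Finset.mem_insert] at hc1
            rcases hc1 with rfl | hc1
            · exact absurd hc2.symm hva
            · exact hbu c ⟨hc1, hc2⟩
        · rw [hBi i (Ne.symm hi)]
          have hv' : v ∈ U i \ Z' i := by rwa [hZ'i i (Ne.symm hi)]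
          exact hB'uniq i v hv'
      · intro i v hv
        by_cases hi : t = i
        · subst hi
          obtain ⟨z, hz, hreach⟩ := hB'reach t v hv
          have hmono : Relation.ReflTransGen
              (fun x y => ∃ b ∈ B' t, tl b = x ∧ hd b = y) z v →
              Relation.ReflTransGen
              (fun x y => ∃ b ∈ B t, tl b = x ∧ hd b = y) z v := by
            apply Relation.ReflTransGen.mono
            rintro x y ⟨b, hb, h1, h2⟩
            exact ⟨b, by rw [hBt]; exact Finset.mem_insert_of_mem hb, h1, h2⟩
          rw [hZ't] at hz
          rcases hz with hz | hz
          · exact ⟨z, hz, hmono hreach⟩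
          · rw [Set.mem_singleton_iff] at hz
            subst hz
            refine ⟨tl a, hC.2.1, Relation.ReflTransGen.head ?_ (hmono hreach)⟩
            exact ⟨a, by rw [hBt]; exact Finset.mem_insert_self a _, rfl, rfl⟩
        · rw [hBi i (Ne.symm hi)]
          have hv2 := hB'reach i v hv
          rwa [hZ'i i (Ne.symm hi)] at hv2

end Induction


-- === bridges to the problem's definitions ===
section Bridge

variable {tl hd : A → V}

lemma mstep_iff {u v : V} :
    mstep tl hd (Empty.elim : Empty → V) (Empty.elim : Empty → V) u v ↔
      ∃ a, tl a = u ∧ hd a = v := by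
  constructor
  · rintro (h | ⟨e, -⟩)
    · exact h
    · exact e.elim
  · exact fun h => Or.inl h

lemma mem_dU_iff {r v : V} :
    v ∈ dU tl hd r ↔ Relation.ReflTransGen (fun x y => ∃ a, tl a = x ∧ hd a = y) r v := by
  constructor
  · intro h
    exact Relation.ReflTransGen.mono (fun x y hxy => mstep_iff.mp hxy) _ _ h
  · intro h
    exact Relation.ReflTransGen.mono (fun x y hxy => mstep_iff.mpr hxy) _ _ h

lemma dU_closed {r : V} {a : A} (h : tl a ∈ dU tl hd r) : hd a ∈ dU tl hd r := by
  rw [mem_dU_iff] at h ⊢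
  exact h.tail ⟨a, rfl, rfl⟩

lemma mem_dW_iff {w : V} {X : Set V} :
    w ∈ dW tl hd X ↔ ∃ x ∈ X, x ∈ dU tl hd w := by
  rfl

end Bridge

end KKTaux

open KKTaux

lemma crossing {α : Type*} {R : α → α → Prop} {P : α → Prop} {u x : α}
    (h : Relation.ReflTransGen R u x) (hu : ¬ P u) (hx : P x) :
    ∃ y z, R y z ∧ ¬ P y ∧ P z := by
  induction h with
  | refl => exact absurd hx hu
  | @tail b c h₁ h₂ ih =>
    by_cases hb : P b
    · exact ih hb
    · exact ⟨b, c, h₂, hb, hx⟩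

/-- **Kamiyama–Katoh–Takizawa.** In a digraph there exist pairwise arc-disjoint maximal
`r i`-arborescences (each spanning the set of vertices reachable from its root) iff
`d_A^-(X) ≥ |{i : r i ∈ W(X) \ X}|` for every nonempty `X ⊆ V`. -/
theorem kamiyama_katoh_takizawa
    {V A : Type} [Fintype V] [Fintype A] [DecidableEq V]
    (tl hd : A → V) (hloopless : ∀ a, tl a ≠ hd a)
    (k : ℕ) (r : Fin k → V) :
    (∃ B : Fin k → Set A,
      (∀ i j, i ≠ j → Disjoint (B i) (B j)) ∧
      ∀ i, IsArbOn tl hd (B i) (r i) (dU tl hd (r i))) ↔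
    (∀ X : Set V, X.Nonempty →
      ({i | r i ∈ dW tl hd X \ X}).ncard ≤ din tl hd X) := by
  classical
  constructor
  · -- necessity
    rintro ⟨B, hdisj, harb⟩ X _
    have key : ∀ i ∈ {i | r i ∈ dW tl hd X \ X}, ∃ a, a ∈ B i ∧ tl a ∉ X ∧ hd a ∈ X := by
      intro i hi
      obtain ⟨⟨x, hxX, hrx⟩, hrX⟩ := hi
      have hreach := (harb i).2.2.2.2 x hrx
      obtain ⟨y, z, ⟨a, haB, hty, hhz⟩, hyX, hzX⟩ :=
        crossing (P := fun v => v ∈ X) hreach hrX hxX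
      exact ⟨a, haB, by rwa [hty], by rwa [hhz]⟩
    rcases Set.eq_empty_or_nonempty {i | r i ∈ dW tl hd X \ X} with hS | hS
    · rw [hS]; simp
    · obtain ⟨i₀, hi₀⟩ := hS
      have : Nonempty A := ⟨(key i₀ hi₀).choose⟩
      set g : Fin k → A := fun i =>
        if h : ∃ a, a ∈ B i ∧ tl a ∉ X ∧ hd a ∈ X then h.choose else Classical.arbitrary A
        with hg
      apply Set.ncard_le_ncard_of_injOn g
      · intro i hi
        have h := key i hi
        simp only [hg, dif_pos h]
        exact ⟨h.choose_spec.2.1, h.choose_spec.2.2⟩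
      · intro i hi j hj hij
        by_contra hne
        have hi' := key i hi
        have hj' := key j hj
        have h1 : g i ∈ B i := by simp only [hg, dif_pos hi']; exact hi'.choose_spec.1
        have h2 : g j ∈ B j := by simp only [hg, dif_pos hj']; exact hj'.choose_spec.1
        exact (hdisj i j hne).le_bot ⟨h1, hij ▸ h2⟩
  · -- sufficiency
    intro hcond
    set U : Fin k → Set V := fun i => dU tl hd (r i) with hU
    set Z : Fin k → Set V := fun i => {r i} with hZ
    have hZU : ∀ i, Z i ⊆ U i := by
      intro i w hw
      rw [hZ] at hw
      rw [Set.mem_singleton_iff] at hw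
      subst hw
      exact Relation.ReflTransGen.refl
    have hoc : OC tl hd U (Finset.univ : Finset A) := by
      intro a _ i hai
      exact dU_closed hai
    have hstar : Star tl hd Z U (Finset.univ : Finset A) := by
      intro X hXne
      have hdem : (DemF Z U X : Set (Fin k)) = {i | r i ∈ dW tl hd X \ X} := by
        ext i
        simp only [Finset.coe_filter, DemF, Finset.mem_univ, true_and, Set.mem_setOf_eq,
          Set.mem_diff]
        constructor
        · rintro ⟨h1, ⟨x, hx1, hx2⟩⟩
          refine ⟨mem_dW_iff.mpr ⟨x, hx1, hx2⟩, ?_⟩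
          intro hc
          have : r i ∈ X ∩ Z i := ⟨hc, rfl⟩
          rw [h1] at this
          exact this
        · rintro ⟨h1, h2⟩
          obtain ⟨x, hx1, hx2⟩ := mem_dW_iff.mp h1
          refine ⟨?_, ⟨x, hx1, hx2⟩⟩
          ext w
          simp only [Set.mem_inter_iff, Set.mem_empty_iff_false, iff_false, not_and]
          intro hwX hwZ
          rw [hZ] at hwZ
          rw [Set.mem_singleton_iff] at hwZ
          subst hwZ
          exact h2 hwX
      have hpp : pp Z U X = ({i | r i ∈ dW tl hd X \ X}).ncard := by
        rw [← hdem, Set.ncard_coe_finset]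
        rfl
      have hdd : dd tl hd (Finset.univ : Finset A) X = din tl hd X := by
        unfold dd ent din
        rw [Set.ncard_eq_toFinset_card']
        congr 1
        ext a
        simp
      rw [hpp, hdd]
      exact hcond X hXne
    obtain ⟨B, hBsub, hBdisj, hBarcs, hBuniq, hBreach⟩ :=
      suff (tl := tl) (hd := hd) (U := U) (∑ i, (U i \ Z i).ncard)
        Finset.univ Z rfl hstar hoc hZU
    refine ⟨fun i => (B i : Set A), ?_, ?_⟩
    · intro i j hij
      rw [Finset.disjoint_coe]
      exact hBdisj i j hij
    · intro i
      refine ⟨Relation.ReflTransGen.refl, ?_, ?_, ?_, ?_⟩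
      · intro a ha
        rw [Finset.mem_coe] at ha
        exact ⟨(hBarcs i a ha).1, (hBarcs i a ha).2.1⟩
      · intro a ha
        rw [Finset.mem_coe] at ha
        intro hc
        apply (hBarcs i a ha).2.2
        rw [hc, hZ]
        rfl
      · intro v hv hvr
        have hv' : v ∈ U i \ Z i := ⟨hv, by
          rw [hZ]; simpa using hvr⟩
        obtain ⟨a, ⟨ha1, ha2⟩, hau⟩ := hBuniq i v hv'
        refine ⟨a, ⟨Finset.mem_coe.mpr ha1, ha2⟩, ?_⟩
        rintro b ⟨hb1, hb2⟩
        exact hau b ⟨Finset.mem_coe.mp hb1, hb2⟩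
      · intro v hv
        obtain ⟨z, hz, hreach⟩ := hBreach i v hv
        have hzr : z = r i := by
          rw [hZ] at hz
          simpa using hz
        subst hzr
        refine Relation.ReflTransGen.mono (fun x y hxy => ?_) _ _ hreach
        obtain ⟨a, ha, h1, h2⟩ := hxy
        exact ⟨a, Finset.mem_coe.mpr ha, h1, h2⟩
end

section
/- Let (D=(V,A),M,S,π) be a matroid-based rooted digraph for which d_A^-(X) ≥ r_M(S_{W(X)}) − r_M(S_X) holds for every nonempty X ⊆ V. If uv ∈ A and X_0 is a minimal tight set such that the arc uv enters X_0, then X_0 ⊆ W(v). -/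
open Set

/-- `X` is tight: `d_A^-(X) = r_M(S_{W(X)}) − r_M(S_X)`. -/
def Tight {V A S : Type} (tl hd : A → V) (M : RankFn S) (π : S → V) (X : Set V) : Prop :=
  M.r (π ⁻¹' dW tl hd X) = din tl hd X + M.r (π ⁻¹' X)

/-- **Lemma 10 of Király (adapted).** If the cut condition holds everywhere, `a` is an arc
with head `v`, and `X₀` is a minimal tight set entered by `a`, then `X₀ ⊆ W(v)`. -/
theorem minimal_tight_set_subset_W
    {V A S : Type} [Fintype V] [Fintype A] [Fintype S] [DecidableEq V]
    (tl hd : A → V) (M : RankFn S) (π : S → V)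
    (hcut : ∀ X : Set V, X.Nonempty →
      M.r (π ⁻¹' dW tl hd X) ≤ din tl hd X + M.r (π ⁻¹' X))
    (a : A) (X0 : Set V)
    (htight : Tight tl hd M π X0)
    (henters : tl a ∉ X0 ∧ hd a ∈ X0)
    (hmin : ∀ X : Set V, X ⊆ X0 → X ≠ X0 → tl a ∉ X → hd a ∈ X →
      ¬ Tight tl hd M π X) :
    X0 ⊆ dW tl hd {hd a} := by
  classical
  set Y : Set V := dW tl hd {hd a} with hYdef
  -- membership in Y means reaching hd a
  have hYmem : ∀ z, z ∈ Y ↔ mreach tl hd (Empty.elim : Empty → V) (Empty.elim : Empty → V) z (hd a) := by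
    intro z
    constructor
    · rintro ⟨x, hx, hr⟩
      rw [Set.mem_singleton_iff] at hx
      rwa [hx] at hr
    · intro h
      exact ⟨hd a, rfl, h⟩
  have hstep : ∀ b : A, mreach tl hd (Empty.elim : Empty → V) (Empty.elim : Empty → V) (tl b) (hd b) :=
    fun b => Relation.ReflTransGen.single (Or.inl ⟨b, rfl, rfl⟩)
  have hYclosed : ∀ b : A, hd b ∈ Y → tl b ∈ Y := by
    intro b hb
    exact (hYmem _).2 ((hstep b).trans ((hYmem _).1 hb))
  have hdaY : hd a ∈ Y := (hYmem _).2 Relation.ReflTransGen.refl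
  by_contra hns
  set X1 : Set V := X0 ∩ Y with hX1def
  set Z : Set V := X0 ∪ Y with hZdef
  have hX1ne : X1 ≠ X0 := by
    intro h
    exact hns (fun x hx => ((h.symm ▸ hx : x ∈ X1)).2)
  have hdaX1 : hd a ∈ X1 := ⟨henters.2, hdaY⟩
  have htlX1 : tl a ∉ X1 := fun h => henters.1 h.1
  -- in-degree submodularity (using d(Y) = 0)
  have hdin : din tl hd X1 + din tl hd Z ≤ din tl hd X0 := by
    have hsub1 : {b : A | tl b ∉ X1 ∧ hd b ∈ X1} ∪ {b : A | tl b ∉ Z ∧ hd b ∈ Z}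
        ⊆ {b : A | tl b ∉ X0 ∧ hd b ∈ X0} := by
      rintro b (⟨h1, h2⟩ | ⟨h1, h2⟩)
      · have htlY : tl b ∈ Y := hYclosed b h2.2
        exact ⟨fun hX0 => h1 ⟨hX0, htlY⟩, h2.1⟩
      · rcases h2 with h2 | h2
        · exact ⟨fun hX0 => h1 (Or.inl hX0), h2⟩
        · exact absurd (Or.inr (hYclosed b h2)) h1
    have hdisj : Disjoint {b : A | tl b ∉ X1 ∧ hd b ∈ X1} {b : A | tl b ∉ Z ∧ hd b ∈ Z} := by
      rw [Set.disjoint_left]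
      rintro b ⟨h1, h2⟩ ⟨h3, h4⟩
      exact h3 (Or.inr (hYclosed b h2.2))
    calc din tl hd X1 + din tl hd Z
        = ({b : A | tl b ∉ X1 ∧ hd b ∈ X1} ∪ {b : A | tl b ∉ Z ∧ hd b ∈ Z}).ncard := by
          rw [Set.ncard_union_eq hdisj (Set.toFinite _) (Set.toFinite _)]; rfl
      _ ≤ din tl hd X0 := Set.ncard_le_ncard hsub1 (Set.toFinite _)
  -- dW X1 = Y
  have hdWX1 : dW tl hd X1 = Y := by
    apply subset_antisymm
    · rintro z ⟨x, hx, hr⟩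
      exact (hYmem z).2 (hr.trans ((hYmem x).1 hx.2))
    · intro z hz
      exact ⟨hd a, hdaX1, (hYmem z).1 hz⟩
  -- monotonicity of dW ranks
  have hmono : M.r (π ⁻¹' dW tl hd X0) ≤ M.r (π ⁻¹' dW tl hd Z) := by
    apply M.mono
    apply Set.preimage_mono
    rintro z ⟨x, hx, hr⟩
    exact ⟨x, Or.inl hx, hr⟩
  -- rank submodularity
  have hsubm : M.r (π ⁻¹' X1) + M.r (π ⁻¹' Z) ≤ M.r (π ⁻¹' X0) + M.r (π ⁻¹' Y) := by
    have := M.submodular (π ⁻¹' X0) (π ⁻¹' Y)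
    rw [← Set.preimage_union, ← Set.preimage_inter, ← hX1def, ← hZdef] at this
    omega
  have hc1 : M.r (π ⁻¹' dW tl hd X1) ≤ din tl hd X1 + M.r (π ⁻¹' X1) :=
    hcut X1 ⟨hd a, hdaX1⟩
  have hcZ : M.r (π ⁻¹' dW tl hd Z) ≤ din tl hd Z + M.r (π ⁻¹' Z) :=
    hcut Z ⟨hd a, Or.inl henters.2⟩
  have h0 : M.r (π ⁻¹' dW tl hd X0) = din tl hd X0 + M.r (π ⁻¹' X0) := htight
  rw [hdWX1] at hc1
  have htight1 : Tight tl hd M π X1 := by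
    show M.r (π ⁻¹' dW tl hd X1) = din tl hd X1 + M.r (π ⁻¹' X1)
    rw [hdWX1]
    omega
  exact hmin X1 Set.inter_subset_left hX1ne htlX1 hdaX1 htight1
end

section
/- Let F = (V; E, A) be a mixed graph, C_0 a strong component of F with no arcs leaving it, and let f_{C_0} : 2^{V(C_0)} \ {∅} → ℤ be defined by f_{C_0}(X) = max{ r_M(S_{W(V(C_0))}) − r_M(S_{X_0}) − d_A^-(X_0) : X ⊆ X_0 and X_0 \ X = W(Y) for some Y ⊆ W(V(C_0)) \ V(C_0) }, where M is a matroid on S with rank function r_M and π : S → V with S_X = π^{-1}(X). Then f_{C_0} is intersecting supermodular, i.e., f_{C_0}(X_1) + f_{C_0}(X_2) ≤ f_{C_0}(X_1 ∪ X_2) + f_{C_0}(X_1 ∩ X_2) whenever X_1, X_2 ⊆ V(C_0) with X_1 ∩ X_2 ≠ ∅. -/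
open Set

section Aux

variable {V A E S : Type} (tl hd : A → V) (e1 e2 : E → V)

lemma wset_empty : Wset tl hd e1 e2 (∅ : Set V) = ∅ := by
  ext v; simp [Wset]

lemma wset_union (Y1 Y2 : Set V) :
    Wset tl hd e1 e2 (Y1 ∪ Y2) = Wset tl hd e1 e2 Y1 ∪ Wset tl hd e1 e2 Y2 := by
  ext v
  constructor
  · rintro ⟨x, hx | hx, hr⟩
    · exact Or.inl ⟨x, hx, hr⟩
    · exact Or.inr ⟨x, hx, hr⟩
  · rintro (⟨x, hx, hr⟩ | ⟨x, hx, hr⟩)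
    · exact ⟨x, Or.inl hx, hr⟩
    · exact ⟨x, Or.inr hx, hr⟩

lemma subset_wset (Y : Set V) : Y ⊆ Wset tl hd e1 e2 Y :=
  fun v hv => ⟨v, hv, Relation.ReflTransGen.refl⟩

lemma wset_subset_wset {Y Z : Set V} (h : Y ⊆ Wset tl hd e1 e2 Z) :
    Wset tl hd e1 e2 Y ⊆ Wset tl hd e1 e2 Z := by
  rintro v ⟨x, hx, hr⟩
  obtain ⟨z, hz, hr'⟩ := h hx
  exact ⟨z, hz, hr.trans hr'⟩

lemma wset_inter_fixed (Y1 Y2 : Set V) :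
    Wset tl hd e1 e2 (Wset tl hd e1 e2 Y1 ∩ Wset tl hd e1 e2 Y2)
      = Wset tl hd e1 e2 Y1 ∩ Wset tl hd e1 e2 Y2 := by
  apply Set.Subset.antisymm
  · intro v hv
    exact ⟨wset_subset_wset tl hd e1 e2 (Set.inter_subset_left.trans subset_rfl) hv,
      wset_subset_wset tl hd e1 e2 Set.inter_subset_right hv⟩
  · exact subset_wset tl hd e1 e2 _

lemma wset_disjoint_comp {C Y : Set V} (hC : IsStrongComp tl hd e1 e2 C)
    (hY : Y ⊆ Wset tl hd e1 e2 C \ C) :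
    ∀ v ∈ Wset tl hd e1 e2 Y, v ∉ C := by
  rintro v ⟨y, hy, hvy⟩ hvC
  obtain ⟨hyW, hyC⟩ := hY hy
  obtain ⟨c, hc, hyc⟩ := hyW
  obtain ⟨_, hmutual, hclose⟩ := hC
  exact hyC (hclose y ⟨v, hvC, hvy, hyc.trans (hmutual c hc v hvC)⟩)

lemma din_submod [Fintype A] (tl hd : A → V) (X Y : Set V) :
    din tl hd (X ∪ Y) + din tl hd (X ∩ Y) ≤ din tl hd X + din tl hd Y := by
  classical
  have hsub1 : {a | tl a ∉ X ∪ Y ∧ hd a ∈ X ∪ Y} ∪ {a | tl a ∉ X ∩ Y ∧ hd a ∈ X ∩ Y} ⊆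
      {a | tl a ∉ X ∧ hd a ∈ X} ∪ {a | tl a ∉ Y ∧ hd a ∈ Y} := by
    rintro a (⟨ht, hh⟩ | ⟨ht, hh⟩) <;>
      simp only [Set.mem_union, Set.mem_inter_iff, Set.mem_setOf_eq] at * <;> tauto
  have hsub2 : {a | tl a ∉ X ∪ Y ∧ hd a ∈ X ∪ Y} ∩ {a | tl a ∉ X ∩ Y ∧ hd a ∈ X ∩ Y} ⊆
      {a | tl a ∉ X ∧ hd a ∈ X} ∩ {a | tl a ∉ Y ∧ hd a ∈ Y} := by
    rintro a ⟨⟨ht, _⟩, ⟨_, hh⟩⟩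
    simp only [Set.mem_union, Set.mem_inter_iff, Set.mem_setOf_eq] at *
    tauto
  unfold din
  calc {a | tl a ∉ X ∪ Y ∧ hd a ∈ X ∪ Y}.ncard + {a | tl a ∉ X ∩ Y ∧ hd a ∈ X ∩ Y}.ncard
      = ({a | tl a ∉ X ∪ Y ∧ hd a ∈ X ∪ Y} ∪ {a | tl a ∉ X ∩ Y ∧ hd a ∈ X ∩ Y}).ncard
        + ({a | tl a ∉ X ∪ Y ∧ hd a ∈ X ∪ Y} ∩ {a | tl a ∉ X ∩ Y ∧ hd a ∈ X ∩ Y}).ncard := by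
        rw [Set.ncard_union_add_ncard_inter _ _ (Set.toFinite _) (Set.toFinite _)]
    _ ≤ ({a | tl a ∉ X ∧ hd a ∈ X} ∪ {a | tl a ∉ Y ∧ hd a ∈ Y}).ncard
        + ({a | tl a ∉ X ∧ hd a ∈ X} ∩ {a | tl a ∉ Y ∧ hd a ∈ Y}).ncard :=
        Nat.add_le_add (Set.ncard_le_ncard hsub1 (Set.toFinite _))
          (Set.ncard_le_ncard hsub2 (Set.toFinite _))
    _ = {a | tl a ∉ X ∧ hd a ∈ X}.ncard + {a | tl a ∉ Y ∧ hd a ∈ Y}.ncard :=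
        Set.ncard_union_add_ncard_inter _ _ (Set.toFinite _) (Set.toFinite _)

end Aux

/-- **Claim: `f_{C₀}` is intersecting supermodular** for a strong component `C₀` with no
arcs leaving it. -/
theorem fC_intersecting_supermodular
    {V A E S : Type} [Fintype V] [Fintype A] [Fintype E] [Fintype S] [DecidableEq V]
    (tl hd : A → V) (e1 e2 : E → V) (M : RankFn S) (π : S → V)
    (C : Set V) (hC : IsStrongComp tl hd e1 e2 C)
    (hout : ∀ a : A, tl a ∈ C → hd a ∈ C)
    (X1 X2 : Set V) (h1 : X1 ⊆ C) (h2 : X2 ⊆ C) (hmeet : (X1 ∩ X2).Nonempty) :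
    fC tl hd e1 e2 M π C X1 + fC tl hd e1 e2 M π C X2 ≤
      fC tl hd e1 e2 M π C (X1 ∪ X2) + fC tl hd e1 e2 M π C (X1 ∩ X2) := by
  classical
  set W : Set V → Set V := Wset tl hd e1 e2 with hW
  set R : ℤ := (M.r (π ⁻¹' W C) : ℤ) with hR
  set cand : Set V → Set ℤ := fun X => {z : ℤ | ∃ X0 : Set V, X ⊆ X0 ∧
    (∃ Y ⊆ W C \ C, X0 \ X = W Y) ∧
    z = R - M.r (π ⁻¹' X0) - din tl hd X0} with hcand
  have hfC : ∀ X : Set V, fC tl hd e1 e2 M π C X = sSup (cand X) := fun X => rfl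
  have hne : ∀ X : Set V, (cand X).Nonempty := by
    intro X
    exact ⟨R - M.r (π ⁻¹' X) - din tl hd X, X, subset_rfl,
      ⟨∅, Set.empty_subset _, by rw [Set.diff_self, hW, wset_empty]⟩, rfl⟩
  have hbdd : ∀ X : Set V, BddAbove (cand X) := by
    intro X
    refine ⟨R, ?_⟩
    rintro z ⟨X0, -, -, rfl⟩
    have h1 : (0 : ℤ) ≤ (M.r (π ⁻¹' X0) : ℤ) := Int.natCast_nonneg _
    have h2 : (0 : ℤ) ≤ (din tl hd X0 : ℤ) := Int.natCast_nonneg _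
    linarith
  obtain ⟨X01, hsub1, ⟨Y1, hY1, hWY1⟩, hz1⟩ := Int.csSup_mem (hne X1) (hbdd X1)
  obtain ⟨X02, hsub2, ⟨Y2, hY2, hWY2⟩, hz2⟩ := Int.csSup_mem (hne X2) (hbdd X2)
  set W1 : Set V := W Y1 with hW1def
  set W2 : Set V := W Y2 with hW2def
  have hX01 : X01 = X1 ∪ W1 := by
    rw [← hWY1, Set.union_diff_cancel hsub1]
  have hX02 : X02 = X2 ∪ W2 := by
    rw [← hWY2, Set.union_diff_cancel hsub2]
  have hd1 : ∀ v ∈ W1, v ∉ C := wset_disjoint_comp tl hd e1 e2 hC hY1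
  have hd2 : ∀ v ∈ W2, v ∉ C := wset_disjoint_comp tl hd e1 e2 hC hY2
  -- union candidate
  have hmemU : R - M.r (π ⁻¹' (X01 ∪ X02)) - din tl hd (X01 ∪ X02) ∈ cand (X1 ∪ X2) := by
    refine ⟨X01 ∪ X02, ?_, ⟨Y1 ∪ Y2, Set.union_subset hY1 hY2, ?_⟩, rfl⟩
    · exact Set.union_subset_union hsub1 hsub2
    · have hwu : W (Y1 ∪ Y2) = W1 ∪ W2 := wset_union tl hd e1 e2 Y1 Y2
      rw [hwu, hX01, hX02]
      ext v
      simp only [Set.mem_diff, Set.mem_union]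
      constructor
      · rintro ⟨hv, hnv⟩; tauto
      · intro hv
        have hvc : v ∉ C := by rcases hv with h | h; exacts [hd1 v h, hd2 v h]
        exact ⟨by tauto, by rintro (h | h); exacts [hvc (h1 h), hvc (h2 h)]⟩
  -- intersection candidate
  have hmemI : R - M.r (π ⁻¹' (X01 ∩ X02)) - din tl hd (X01 ∩ X02) ∈ cand (X1 ∩ X2) := by
    refine ⟨X01 ∩ X02, Set.inter_subset_inter hsub1 hsub2, ⟨W1 ∩ W2, ?_, ?_⟩, rfl⟩
    · intro v hv
      refine ⟨wset_subset_wset tl hd e1 e2 (hY1.trans Set.diff_subset) hv.1, hd1 v hv.1⟩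
    · have hfix : W (W1 ∩ W2) = W1 ∩ W2 := wset_inter_fixed tl hd e1 e2 Y1 Y2
      rw [hfix, hX01, hX02]
      ext v
      simp only [Set.mem_diff, Set.mem_inter_iff, Set.mem_union]
      constructor
      · rintro ⟨⟨hv1, hv2⟩, hnv⟩
        rcases hv1 with h | h
        · rcases hv2 with h' | h'
          · exact absurd ⟨h, h'⟩ hnv
          · exact absurd (h1 h) (hd2 v h')
        · rcases hv2 with h' | h'
          · exact absurd (h2 h') (hd1 v h)
          · exact ⟨h, h'⟩
      · rintro ⟨hv1, hv2⟩
        exact ⟨⟨Or.inr hv1, Or.inr hv2⟩, fun h => hd1 v hv1 (h1 h.1)⟩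
  -- submodularity inequalities
  have hr : (M.r (π ⁻¹' (X01 ∪ X02)) : ℤ) + M.r (π ⁻¹' (X01 ∩ X02)) ≤
      (M.r (π ⁻¹' X01) : ℤ) + M.r (π ⁻¹' X02) := by
    have := M.submodular (π ⁻¹' X01) (π ⁻¹' X02)
    rw [← Set.preimage_union, ← Set.preimage_inter] at this
    exact_mod_cast this
  have hdin : (din tl hd (X01 ∪ X02) : ℤ) + din tl hd (X01 ∩ X02) ≤
      (din tl hd X01 : ℤ) + din tl hd X02 := by
    exact_mod_cast din_submod tl hd X01 X02
  have hle1 : R - M.r (π ⁻¹' (X01 ∪ X02)) - din tl hd (X01 ∪ X02) ≤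
      sSup (cand (X1 ∪ X2)) := le_csSup (hbdd _) hmemU
  have hle2 : R - M.r (π ⁻¹' (X01 ∩ X02)) - din tl hd (X01 ∩ X02) ≤
      sSup (cand (X1 ∩ X2)) := le_csSup (hbdd _) hmemI
  rw [hfC, hfC, hfC, hfC, hz1, hz2]
  linarith
end

section
/- Let (F=(V;E,A),M,S,π) be a matroid-based rooted mixed graph. If there exists a maximal M-independent packing of mixed arborescences in F, then π is M-independent and e_E(P) + Σ_{q=1}^t d_A^-(X^q) ≥ Σ_{q=1}^t ( r_M(S_{W(V(C))}) − r_M(S_{(X^q)_O}) ) holds for any family of bi-sets {X^1, ..., X^t} such that P = {(X^1)_I, ..., (X^t)_I} is a subpartition of V(C) for some strong component C and (X^q)_O \ (X^q)_I = W(Y^q) for some Y^q ⊆ W(V(C)) \ V(C) for each q. -/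
open Set

section AuxLemmas

variable {V A E S : Type}

lemma wset_eq_of_strong (tl hd : A → V) (e1 e2 : E → V) {C : Set V}
    (hC : IsStrongComp tl hd e1 e2 C) {v : V} (hv : v ∈ C) :
    Wset tl hd e1 e2 {v} = Wset tl hd e1 e2 C := by
  ext u
  constructor
  · rintro ⟨x, hx, hr⟩
    rw [Set.mem_singleton_iff] at hx
    subst hx
    exact ⟨x, hv, hr⟩
  · rintro ⟨c, hc, hr⟩
    exact ⟨v, rfl, hr.trans (hC.2.1 c hc v hv)⟩

lemma cstep_mstep (tl hd : A → V) (e1 e2 : E → V) (o : E → Bool) (b : A ⊕ E) :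
    mstep tl hd e1 e2 (ctl tl e1 e2 o b) (chd hd e1 e2 o b) := by
  cases b with
  | inl a => exact Or.inl ⟨a, rfl, rfl⟩
  | inr e =>
    by_cases h : o e
    · exact Or.inr ⟨e, Or.inl ⟨by simp [ctl, h], by simp [chd, h]⟩⟩
    · exact Or.inr ⟨e, Or.inr ⟨by simp [ctl, h], by simp [chd, h]⟩⟩

lemma crossing_s11 (tl hd : A → V) (e1 e2 : E → V) (o : E → Bool) (Bs : Set (A ⊕ E))
    {XO XI : Set V}
    (hcl : ∀ u w : V, mstep tl hd e1 e2 u w → w ∈ XO \ XI → u ∈ XO)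
    (hIO : XI ⊆ XO) {r v : V} (hv : v ∈ XI)
    (hpath : Relation.ReflTransGen
      (fun x y => ∃ b ∈ Bs, ctl tl e1 e2 o b = x ∧ chd hd e1 e2 o b = y) r v)
    (hr : r ∉ XO) :
    ∃ b ∈ Bs, ctl tl e1 e2 o b ∉ XO ∧ chd hd e1 e2 o b ∈ XI := by
  revert hr
  induction hpath using Relation.ReflTransGen.head_induction_on with
  | refl => exact fun hr => absurd (hIO hv) hr
  | head hstep hpath ih =>
    intro hr
    obtain ⟨b, hb, hbt, hbh⟩ := hstep
    subst hbt
    subst hbh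
    by_cases h1 : chd hd e1 e2 o b ∈ XI
    · exact ⟨b, hb, hr, h1⟩
    · by_cases h2 : chd hd e1 e2 o b ∈ XO
      · exact absurd (hcl _ _ (cstep_mstep tl hd e1 e2 o b) ⟨h2, h1⟩) hr
      · exact ih h2

lemma aux_indep_subset [Fintype S] (M : RankFn S) {X Y : Set S}
    (hX : M.Indep X) (h : Y ⊆ X) : M.Indep Y := by
  have hsub := M.submodular Y (X \ Y)
  rw [Set.union_diff_cancel h, Set.inter_diff_self, M.rank_empty] at hsub
  have h1 : M.r (X \ Y) ≤ (X \ Y).ncard := M.le_ncard _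
  have h2 : (X \ Y).ncard + Y.ncard = X.ncard :=
    Set.ncard_diff_add_ncard_of_subset h (Set.toFinite X)
  have h3 : M.r X = X.ncard := hX
  have h4 : M.r Y ≤ Y.ncard := M.le_ncard Y
  have h5 : Y.ncard ≤ M.r Y := by omega
  exact le_antisymm h4 h5

end AuxLemmas
/-- **(i) ⇒ (ii).** If a maximal `M`-independent packing of mixed arborescences exists,
then `π` is `M`-independent and the bi-set cut condition (ii) holds for every strong
component. -/
theorem packing_implies_biset_condition
    {V A E S : Type} [Fintype V] [Fintype A] [Fintype E] [Fintype S] [DecidableEq V]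
    (tl hd : A → V) (e1 e2 : E → V) (M : RankFn S) (π : S → V)
    (hpack : MaxIndMixedPacking tl hd e1 e2 M π) :
    MIndep M π ∧
    ∀ C : Set V, IsStrongComp tl hd e1 e2 C →
    ∀ (t : ℕ) (XO XI : Fin t → Set V),
      (∀ q, (XI q).Nonempty) → (∀ q, XI q ⊆ C) →
      (∀ q q', q ≠ q' → Disjoint (XI q) (XI q')) →
      (∀ q, XI q ⊆ XO q) →
      (∀ q, ∃ Y ⊆ Wset tl hd e1 e2 C \ C, XO q \ XI q = Wset tl hd e1 e2 Y) →
      (∑ q, ((M.r (π ⁻¹' Wset tl hd e1 e2 C) : ℤ) - M.r (π ⁻¹' XO q))) ≤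
        (eP e1 e2 XI : ℤ) +
          ∑ q, (({a : A | tl a ∉ XO q ∧ hd a ∈ XI q}).ncard : ℤ) := by
  classical
  obtain ⟨o, B, VT, hdisj, harb, hprop⟩ := hpack
  constructor
  · intro w
    refine aux_indep_subset M (hprop w).1 ?_
    intro s hs
    rw [Set.mem_preimage, Set.mem_singleton_iff] at hs
    show w ∈ VT s
    rw [← hs]
    exact (harb s).1
  · intro C hC t XO XI hne hsubC hdis hIO hYex
    choose v hv using hne
    have hvC : ∀ q, v q ∈ C := fun q => hsubC q (hv q)
    set rW := M.r (π ⁻¹' Wset tl hd e1 e2 C) with hrW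
    have hWv : ∀ q, ({s | v q ∈ VT s}).ncard = rW := by
      intro q
      rw [(hprop (v q)).2, wset_eq_of_strong tl hd e1 e2 hC (hvC q)]
    set Sq : Fin t → Set S := fun q => {s | v q ∈ VT s ∧ π s ∉ XO q} with hSq
    -- rank bound per q
    have hrank : ∀ q, (rW : ℤ) - (M.r (π ⁻¹' XO q) : ℤ) ≤ ((Sq q).ncard : ℤ) := by
      intro q
      set P : Set S := {s | v q ∈ VT s ∧ π s ∈ XO q} with hP
      have hunion : {s | v q ∈ VT s} = Sq q ∪ P := by
        ext s
        simp only [hSq, hP, Set.mem_setOf_eq, Set.mem_union]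
        tauto
      have hdisjSP : Disjoint (Sq q) P := by
        rw [Set.disjoint_left]
        rintro s ⟨_, h1⟩ ⟨_, h2⟩
        exact h1 h2
      have hcardU : (Sq q).ncard + P.ncard = rW := by
        rw [← hWv q, hunion, Set.ncard_union_eq hdisjSP (Set.toFinite _) (Set.toFinite _)]
      have hPle : P.ncard ≤ M.r (π ⁻¹' XO q) := by
        have hPind : M.Indep P := aux_indep_subset M (hprop (v q)).1 (fun s hs => hs.1)
        calc P.ncard = M.r P := hPind.symm
        _ ≤ M.r (π ⁻¹' XO q) := M.mono (fun s hs => hs.2)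
      omega
    -- closure property of the bi-sets
    have hcl : ∀ q, ∀ u w : V, mstep tl hd e1 e2 u w → w ∈ XO q \ XI q → u ∈ XO q := by
      intro q u w hst hw
      obtain ⟨Y, _, hYeq⟩ := hYex q
      rw [hYeq] at hw
      obtain ⟨x, hx, hr⟩ := hw
      have hu : u ∈ Wset tl hd e1 e2 Y := ⟨x, hx, Relation.ReflTransGen.head hst hr⟩
      rw [← hYeq] at hu
      exact hu.1
    -- for each q and s ∈ Sq q there is a crossing arc/edge in B s
    have hcross : ∀ (x : Σ q : Fin t, {s // s ∈ Sq q}),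
        ∃ b : A ⊕ E, b ∈ B x.2.1 ∧ ctl tl e1 e2 o b ∉ XO x.1 ∧
          chd hd e1 e2 o b ∈ XI x.1 := by
      rintro ⟨q, s, hs⟩
      exact crossing_s11 tl hd e1 e2 o (B s) (hcl q) (hIO q) (hv q)
        ((harb s).2.2.2.2 (v q) hs.1) hs.2
    choose bb hbB hbO hbI using hcross
    set Eset : Set E :=
      {e | (∃ q, e1 e ∈ XI q ∨ e2 e ∈ XI q) ∧ ¬∃ q, e1 e ∈ XI q ∧ e2 e ∈ XI q} with hEset
    set Aset : Fin t → Set A := fun q => {a | tl a ∉ XO q ∧ hd a ∈ XI q} with hAset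
    have hedge : ∀ (q : Fin t) (e : E), ctl tl e1 e2 o (Sum.inr e) ∉ XO q →
        chd hd e1 e2 o (Sum.inr e) ∈ XI q → e ∈ Eset := by
      intro q e hO hI
      have hc : ctl tl e1 e2 o (Sum.inr e) = if o e then e1 e else e2 e := rfl
      have hh : chd hd e1 e2 o (Sum.inr e) = if o e then e2 e else e1 e := rfl
      constructor
      · by_cases h : o e
        · exact ⟨q, Or.inr (by rw [hh, if_pos h] at hI; exact hI)⟩
        · exact ⟨q, Or.inl (by rw [hh, if_neg h] at hI; exact hI)⟩
      · rintro ⟨q', h1, h2⟩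
        have hq : q' = q := by
          by_contra hne'
          have hchd : chd hd e1 e2 o (Sum.inr e) ∈ XI q' := by
            rw [hh]; split
            · exact h2
            · exact h1
          exact (Set.disjoint_left.mp (hdis q' q hne')) hchd hI
        subst hq
        have hctl : ctl tl e1 e2 o (Sum.inr e) ∈ XI q' := by
          rw [hc]; split
          · exact h1
          · exact h2
        exact hO (hIO q' hctl)
    -- the injection
    let D := Σ q : Fin t, {s // s ∈ Sq q}
    let T := ↥Eset ⊕ Σ q : Fin t, {a // a ∈ Aset q}
    let F : D → T := fun x =>
      match hm : bb x with
      | Sum.inl a => Sum.inr ⟨x.1, a, by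
          have h1 := hbO x; have h2 := hbI x
          rw [hm] at h1 h2
          exact ⟨h1, h2⟩⟩
      | Sum.inr e => Sum.inl ⟨e, by
          have h1 := hbO x; have h2 := hbI x
          rw [hm] at h1 h2
          exact hedge x.1 e h1 h2⟩
    have hbbinj : ∀ x y : D, bb x = bb y → x = y := by
      rintro ⟨q, s, hs⟩ ⟨q', s', hs'⟩ hbxy
      have hss : s = s' := by
        by_contra hne'
        exact Set.disjoint_left.mp (hdisj s s' hne') (hbB ⟨q, s, hs⟩)
          (hbxy ▸ hbB ⟨q', s', hs'⟩)
      subst hss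
      have hqq : q = q' := by
        by_contra hne'
        exact Set.disjoint_left.mp (hdis q q' hne') (hbI ⟨q, s, hs⟩)
          (hbxy ▸ hbI ⟨q', s, hs'⟩)
      subst hqq
      rfl
    let G : T → A ⊕ E := fun y =>
      match y with
      | Sum.inl e => Sum.inr e.1
      | Sum.inr p => Sum.inl p.2.1
    have hGF : ∀ x : D, G (F x) = bb x := by
      intro x
      show G (match hm : bb x with
        | Sum.inl a => Sum.inr ⟨x.1, a, _⟩
        | Sum.inr e => Sum.inl ⟨e, _⟩) = bb x
      split
      · rename_i a ha; exact ha.symm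
      · rename_i e he; exact he.symm
    have hFinj : Function.Injective F := by
      intro x y hxy
      apply hbbinj
      rw [← hGF x, ← hGF y, hxy]
    have hcardle : Nat.card D ≤ Nat.card T := Nat.card_le_card_of_injective F hFinj
    have hD : Nat.card D = ∑ q, (Sq q).ncard := by
      simp only [D, Nat.card_eq_fintype_card, Fintype.card_sigma]
      congr 1
      ext q
      rw [← Nat.card_coe_set_eq, Nat.card_eq_fintype_card]
    have hT : Nat.card T = Eset.ncard + ∑ q, (Aset q).ncard := by
      have h1 : Nat.card T =
          Nat.card ↥Eset + Nat.card (Σ q : Fin t, {a // a ∈ Aset q}) := Nat.card_sum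
      rw [h1, Nat.card_coe_set_eq]
      congr 1
      simp only [Nat.card_eq_fintype_card, Fintype.card_sigma]
      exact Finset.sum_congr rfl fun q _ => by
        rw [← Nat.card_eq_fintype_card, Nat.card_coe_set_eq]
    have hkey : ∑ q, (Sq q).ncard ≤ Eset.ncard + ∑ q, (Aset q).ncard := by
      rw [← hD, ← hT]; exact hcardle
    have hEP : eP e1 e2 XI = Eset.ncard := rfl
    calc (∑ q, ((rW : ℤ) - (M.r (π ⁻¹' XO q) : ℤ)))
        ≤ ∑ q, ((Sq q).ncard : ℤ) := Finset.sum_le_sum (fun q _ => hrank q)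
      _ ≤ (eP e1 e2 XI : ℤ) + ∑ q, (((Aset q).ncard : ℤ)) := by
          rw [hEP]
          exact_mod_cast hkey
      _ = (eP e1 e2 XI : ℤ) + ∑ q, (({a : A | tl a ∉ XO q ∧ hd a ∈ XI q}).ncard : ℤ) := rfl
end

section
/- Let (F=(V;E,A),M,S,π) be a matroid-based rooted mixed graph. Suppose π is M-independent and condition (ii) holds: e_E(P) + Σ_{q=1}^t d_A^-(X^q) ≥ Σ_{q=1}^t ( r_M(S_{W(V(C))}) − r_M(S_{(X^q)_O}) ) for all families of bi-sets {X^1,...,X^t} with inner sets forming a subpartition of a strong component C and (X^q)_O \ (X^q)_I = W(Y^q) for some Y^q ⊆ W(V(C)) \ V(C). Then condition (iii) holds: e_E(P) ≥ Σ_{q=1}^t f_C(X_q) for every strong component C and subpartition {X_1,...,X_t} of V(C), where f_C(X_q) = max{ r_M(S_{W(V(C))}) − r_M(S_X) − d_A^-(X) : X_q ⊆ X, X \ X_q = W(Y), Y ⊆ W(V(C)) \ V(C) }. -/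
open Set

/-- **(ii) ⇒ (iii).** If `π` is `M`-independent and the bi-set condition (ii) holds, then
the subpartition condition (iii) with the function `f_C` holds. -/
theorem biset_condition_implies_fC_condition
    {V A E S : Type} [Fintype V] [Fintype A] [Fintype E] [Fintype S] [DecidableEq V]
    (tl hd : A → V) (e1 e2 : E → V) (M : RankFn S) (π : S → V)
    (hind : MIndep M π)
    (hii : ∀ C : Set V, IsStrongComp tl hd e1 e2 C →
      ∀ (t : ℕ) (XO XI : Fin t → Set V),
        (∀ q, (XI q).Nonempty) → (∀ q, XI q ⊆ C) →
        (∀ q q', q ≠ q' → Disjoint (XI q) (XI q')) →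
        (∀ q, XI q ⊆ XO q) →
        (∀ q, ∃ Y ⊆ Wset tl hd e1 e2 C \ C, XO q \ XI q = Wset tl hd e1 e2 Y) →
        (∑ q, ((M.r (π ⁻¹' Wset tl hd e1 e2 C) : ℤ) - M.r (π ⁻¹' XO q))) ≤
          (eP e1 e2 XI : ℤ) +
            ∑ q, (({a : A | tl a ∉ XO q ∧ hd a ∈ XI q}).ncard : ℤ)) :
    ∀ C : Set V, IsStrongComp tl hd e1 e2 C →
      ∀ (t : ℕ) (P : Fin t → Set V), (∀ q, (P q).Nonempty) → (∀ q, P q ⊆ C) →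
        (∀ q q', q ≠ q' → Disjoint (P q) (P q')) →
        ∑ q, fC tl hd e1 e2 M π C (P q) ≤ (eP e1 e2 P : ℤ) := by
  intro C hC t P hne hsub hdisj
  -- For each q, the sup defining fC is attained.
  have hmem : ∀ q : Fin t, ∃ X0 : Set V, P q ⊆ X0 ∧
      (∃ Y ⊆ Wset tl hd e1 e2 C \ C, X0 \ P q = Wset tl hd e1 e2 Y) ∧
      fC tl hd e1 e2 M π C (P q) =
        (M.r (π ⁻¹' Wset tl hd e1 e2 C) : ℤ) - M.r (π ⁻¹' X0) - din tl hd X0 := by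
    intro q
    set s : Set ℤ := {z : ℤ | ∃ X0 : Set V, P q ⊆ X0 ∧
      (∃ Y ⊆ Wset tl hd e1 e2 C \ C, P q ⊆ X0 ∧ X0 \ P q = Wset tl hd e1 e2 Y) ∧
      z = (M.r (π ⁻¹' Wset tl hd e1 e2 C) : ℤ) - M.r (π ⁻¹' X0) - din tl hd X0} with hs
    have hWempty : Wset tl hd e1 e2 (∅ : Set V) = ∅ := by
      ext v; simp [Wset]
    have hsne : {z : ℤ | ∃ X0 : Set V, P q ⊆ X0 ∧
        (∃ Y ⊆ Wset tl hd e1 e2 C \ C, X0 \ P q = Wset tl hd e1 e2 Y) ∧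
        z = (M.r (π ⁻¹' Wset tl hd e1 e2 C) : ℤ) - M.r (π ⁻¹' X0) - din tl hd X0}.Nonempty := by
      refine ⟨_, P q, subset_rfl, ⟨∅, by simp, by simp [hWempty]⟩, rfl⟩
    have hbdd : BddAbove {z : ℤ | ∃ X0 : Set V, P q ⊆ X0 ∧
        (∃ Y ⊆ Wset tl hd e1 e2 C \ C, X0 \ P q = Wset tl hd e1 e2 Y) ∧
        z = (M.r (π ⁻¹' Wset tl hd e1 e2 C) : ℤ) - M.r (π ⁻¹' X0) - din tl hd X0} := by
      refine ⟨(M.r (π ⁻¹' Wset tl hd e1 e2 C) : ℤ), ?_⟩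
      rintro z ⟨X0, -, -, rfl⟩
      have h1 : (0 : ℤ) ≤ M.r (π ⁻¹' X0) := Int.ofNat_nonneg _
      have h2 : (0 : ℤ) ≤ din tl hd X0 := Int.ofNat_nonneg _
      omega
    have := Int.csSup_mem hsne hbdd
    obtain ⟨X0, h1, h2, h3⟩ := this
    exact ⟨X0, h1, h2, h3⟩
  choose X0 hX0sub hX0Y hX0val using hmem
  -- Apply (ii) with XO = X0, XI = P.
  have hii' := hii C hC t X0 P hne hsub hdisj hX0sub hX0Y
  have hdin : ∀ q : Fin t,
      (({a : A | tl a ∉ X0 q ∧ hd a ∈ P q}).ncard : ℤ) ≤ (din tl hd (X0 q) : ℤ) := by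
    intro q
    have hsubs : {a : A | tl a ∉ X0 q ∧ hd a ∈ P q} ⊆
        {a : A | tl a ∉ X0 q ∧ hd a ∈ X0 q} := by
      rintro a ⟨ha1, ha2⟩; exact ⟨ha1, hX0sub q ha2⟩
    exact_mod_cast Set.ncard_le_ncard hsubs (Set.toFinite _)
  calc ∑ q, fC tl hd e1 e2 M π C (P q)
      = ∑ q, ((M.r (π ⁻¹' Wset tl hd e1 e2 C) : ℤ) - M.r (π ⁻¹' X0 q)
          - din tl hd (X0 q)) := Finset.sum_congr rfl (fun q _ => hX0val q)
    _ = (∑ q, ((M.r (π ⁻¹' Wset tl hd e1 e2 C) : ℤ) - M.r (π ⁻¹' X0 q)))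
          - ∑ q, (din tl hd (X0 q) : ℤ) := by
        rw [← Finset.sum_sub_distrib]
    _ ≤ ((eP e1 e2 P : ℤ) +
          ∑ q, (({a : A | tl a ∉ X0 q ∧ hd a ∈ P q}).ncard : ℤ))
          - ∑ q, (din tl hd (X0 q) : ℤ) := by
        exact sub_le_sub_right hii' _
    _ ≤ (eP e1 e2 P : ℤ) := by
        have := Finset.sum_le_sum (fun q (_ : q ∈ Finset.univ) => hdin q)
        omega
end
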